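/- arXiv:2003.03840 — 5 statements merged into one kernel-verified Lean document; each statement's English description precedes it below -/
import Mathlib

section
/- For every n ≥ 3 and every integer m ≥ 1 satisfying m ≤ (n−2)/2 if n is even and m ≤ (n−1)/2 if n is odd, there exists a well-rounded lattice L in ℝⁿ possessing a weakly nearly orthogonal basis such that |S(L)| = 3n + 2m if n is even and |S(L)| = 3n − 1 + 2m if n is odd. Consequently, every even number between 3n and 4n − 2 (inclusive) occurs as |S(L)| for some such lattice. -/
open scoped RealInnerProductSpace
open Submodule Metric MeasureTheory

noncomputable section

abbrev Evec (n : ℕ) := EuclideanSpace ℝ (Fin n)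

/-- The lattice generated (over ℤ) by the vectors `b 0, …, b (n-1)`. -/
def latticeOf {n : ℕ} (b : Fin n → Evec n) : Set (Evec n) :=
  {x | ∃ c : Fin n → ℤ, x = ∑ i, (c i : ℝ) • b i}

/-- The set of minimal vectors `S(L)` of a lattice `L`. -/
def minVecs {n : ℕ} (L : Set (Evec n)) : Set (Evec n) :=
  {x | x ∈ L ∧ x ≠ 0 ∧ ∀ y ∈ L, y ≠ 0 → ‖x‖ ≤ ‖y‖}

/-- `L` is well-rounded: its minimal vectors span `ℝⁿ`. -/
def IsWellRounded {n : ℕ} (L : Set (Evec n)) : Prop :=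
  Submodule.span ℝ (minVecs L) = ⊤

/-- `L` has minimal norm `m`. -/
def hasMinNorm {n : ℕ} (L : Set (Evec n)) (m : ℝ) : Prop :=
  (∃ x ∈ L, x ≠ 0 ∧ ‖x‖ = m) ∧ ∀ x ∈ L, x ≠ 0 → m ≤ ‖x‖

/-- The angle in `[0, π/2]` between a vector `v` and a subspace `V`,
whose cosine is `‖proj_V v‖ / ‖v‖`. -/
def subAngle {n : ℕ} (v : Evec n) (V : Submodule ℝ (Evec n)) : ℝ :=
  Real.arccos (‖(orthogonalProjection V v : Evec n)‖ / ‖v‖)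

/-- The ordered basis `b` is weakly θ-orthogonal. -/
def WeaklyOrth {n : ℕ} (θ : ℝ) (b : Fin n → Evec n) : Prop :=
  ∀ i : Fin n, 0 < (i : ℕ) →
    θ ≤ subAngle (b i) (Submodule.span ℝ (b '' {j | j < i}))

/-- The basis `b` is θ-orthogonal: every ordering of it is weakly θ-orthogonal. -/
def Orth {n : ℕ} (θ : ℝ) (b : Fin n → Evec n) : Prop :=
  ∀ σ : Equiv.Perm (Fin n), WeaklyOrth θ (b ∘ σ)

/-- A nearly orthogonal basis is a π/3-orthogonal basis. -/
def NearlyOrth {n : ℕ} (b : Fin n → Evec n) : Prop := Orth (Real.pi / 3) b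

/-- A weakly nearly orthogonal basis is a weakly π/3-orthogonal basis. -/
def WeaklyNearlyOrth {n : ℕ} (b : Fin n → Evec n) : Prop := WeaklyOrth (Real.pi / 3) b

/-- Coherence `C(L)` of a lattice. -/
def coherence {n : ℕ} (L : Set (Evec n)) : ℝ :=
  sSup {t | ∃ x ∈ minVecs L, ∃ y ∈ minVecs L, x ≠ y ∧ x ≠ -y ∧
    t = abs ⟪x, y⟫ / (‖x‖ * ‖y‖)}

/-- `μ(B)`: minimal absolute cosine of angles between distinct basis vectors. -/
def muB {n : ℕ} (b : Fin n → Evec n) : ℝ :=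
  sInf {t | ∃ i j : Fin n, i ≠ j ∧ t = abs ⟪b i, b j⟫ / (‖b i‖ * ‖b j‖)}

/-- `ν(B)`: maximal absolute cosine of angles between distinct basis vectors. -/
def nuB {n : ℕ} (b : Fin n → Evec n) : ℝ :=
  sSup {t | ∃ i j : Fin n, i ≠ j ∧ t = abs ⟪b i, b j⟫ / (‖b i‖ * ‖b j‖)}

/-- The determinant of the lattice with basis `b`. -/
def latDet {n : ℕ} (b : Fin n → Evec n) : ℝ :=
  |(Matrix.of fun i j : Fin n => b j i).det|

/-- Packing density of a lattice with basis `b` and minimal norm `m`: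
`ω_n · m^n / (2^n · det L)`. -/
def packDensity {n : ℕ} (m : ℝ) (b : Fin n → Evec n) : ℝ :=
  (volume (ball (0 : Evec n) 1)).toReal * m ^ n / (2 ^ n * latDet b)

/-- `L` is strongly eutactic. -/
def StronglyEutactic {n : ℕ} (L : Set (Evec n)) : Prop :=
  ∃ c : ℝ, 0 < c ∧ ∀ v : Evec n, ‖v‖ ^ 2 = c * ∑ᶠ x ∈ minVecs L, ⟪v, x⟫ ^ 2

/-- `L` is perfect: `{x xᵀ : x ∈ S(L)}` spans the symmetric `n × n` matrices. -/
def IsPerfect {n : ℕ} (L : Set (Evec n)) : Prop :=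
  ∀ A : Matrix (Fin n) (Fin n) ℝ, A.IsSymm →
    A ∈ Submodule.span ℝ ((fun x : Evec n => Matrix.of fun i j => x i * x j) '' minVecs L)

end

noncomputable section

namespace S12

variable {n ℓ : ℕ}

/-- k-th standard basis vector (0 if out of range). -/
def Ev (n k : ℕ) : Evec n := if h : k < n then EuclideanSpace.single ⟨k, h⟩ 1 else 0

/-- the chain basis vectors -/
def gv (n ℓ : ℕ) : ℕ → Evec n
  | 0 => Ev n 0
  | (i+1) => if i + 1 ≤ ℓ then (1/2 : ℝ) • gv n ℓ i + (Real.sqrt 3 / 2) • Ev n (i+1)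
             else Ev n (i+1)

lemma Ev_apply (k : ℕ) (hk : k < n) (j : Fin n) :
    Ev n k j = if (j : ℕ) = k then 1 else 0 := by
  rw [Ev, dif_pos hk, EuclideanSpace.single_apply]
  congr 1
  simp [Fin.ext_iff]

lemma gv_apply_hi (i : ℕ) (j : Fin n) (hij : i < (j : ℕ)) : gv n ℓ i j = 0 := by
  induction i with
  | zero => rw [gv, Ev_apply 0 (lt_of_le_of_lt (Nat.zero_le _) j.2)]; simp; omega
  | succ i ih =>
      rw [gv]
      split
      · have h1 : gv n ℓ i j = 0 := ih (by omega)
        have h2 : Ev n (i+1) j = 0 := by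
          rw [Ev_apply (i+1) (lt_of_le_of_lt (le_of_lt hij) j.2)]; simp; omega
        simp [h1, h2]
      · rw [Ev_apply (i+1) (lt_of_le_of_lt (le_of_lt hij) j.2)]; simp; omega

lemma inner_Ev (x : Evec n) (k : ℕ) (hk : k < n) :
    ⟪x, Ev n k⟫ = x ⟨k, hk⟩ := by
  rw [Ev, dif_pos hk]
  rw [EuclideanSpace.inner_single_right]
  simp

lemma Ev_norm_sq (k : ℕ) (hk : k < n) : ⟪Ev n k, Ev n k⟫ = 1 := by
  rw [inner_Ev _ k hk, Ev_apply k hk]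
  simp

lemma gv_norm_sq (i : ℕ) (hi : i < n) : ⟪gv n ℓ i, gv n ℓ i⟫ = 1 := by
  induction i with
  | zero => exact Ev_norm_sq 0 hi
  | succ i ih =>
      have ih' := ih (by omega)
      rw [gv]
      split
      · have hEv : ⟪gv n ℓ i, Ev n (i+1)⟫ = 0 := by
          rw [inner_Ev _ (i+1) hi]
          exact gv_apply_hi i ⟨i+1, hi⟩ (by simp)
        have h3 : (Real.sqrt 3) ^ 2 = 3 := Real.sq_sqrt (by norm_num)
        have hEv' : ⟪Ev n (i+1), gv n ℓ i⟫ = 0 := by rw [real_inner_comm]; exact hEv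
        rw [inner_add_add_self]
        simp only [real_inner_smul_left, real_inner_smul_right]
        rw [ih', hEv, hEv', Ev_norm_sq (i+1) hi]
        nlinarith [h3]
      · exact Ev_norm_sq (i+1) hi

lemma gv_norm (i : ℕ) (hi : i < n) : ‖gv n ℓ i‖ = 1 := by
  have h := gv_norm_sq (ℓ := ℓ) i hi
  rw [real_inner_self_eq_norm_sq] at h
  nlinarith [norm_nonneg (gv n ℓ i)]

/-- halving identity: for i < j ≤ ℓ, ⟪g i, g j⟫ = (1/2) ⟪g i, g (j-1)⟫ -/
lemma inner_gv_succ (i j : ℕ) (hij : i < j + 1) (hjl : j + 1 ≤ ℓ) (hjn : j + 1 < n) :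
    ⟪gv n ℓ i, gv n ℓ (j+1)⟫ = (1/2) * ⟪gv n ℓ i, gv n ℓ j⟫ := by
  rw [gv]
  rw [if_pos hjl]
  have hEv : ⟪gv n ℓ i, Ev n (j+1)⟫ = 0 := by
    rw [inner_Ev _ (j+1) hjn]
    exact gv_apply_hi i ⟨j+1, hjn⟩ (by simpa using hij)
  rw [inner_add_right, real_inner_smul_right, real_inner_smul_right, hEv]
  ring

/-- vanishing: for i < j with ℓ < j, ⟪g i, g j⟫ = 0 -/
lemma inner_gv_zero (i j : ℕ) (hij : i < j) (hjl : ℓ < j) (hjn : j < n) :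
    ⟪gv n ℓ i, gv n ℓ j⟫ = 0 := by
  obtain ⟨j', rfl⟩ : ∃ j', j = j' + 1 := ⟨j - 1, by omega⟩
  rw [gv, if_neg (by omega)]
  rw [inner_Ev _ _ hjn]
  exact gv_apply_hi i ⟨j'+1, hjn⟩ (by simpa using hij)

/-- the basis -/
def bv (n ℓ : ℕ) : Fin n → Evec n := fun i => gv n ℓ (i : ℕ)

lemma bv_norm (i : Fin n) : ‖bv n ℓ i‖ = 1 := gv_norm (i : ℕ) i.2

lemma bv_norm_sq (i : Fin n) : ⟪bv n ℓ i, bv n ℓ i⟫ = 1 := gv_norm_sq (i : ℕ) i.2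

lemma gv_diag (i : ℕ) (hi : i < n) : gv n ℓ i ⟨i, hi⟩ ≠ 0 := by
  cases i with
  | zero => rw [gv, Ev_apply 0 hi]; norm_num
  | succ i =>
      rw [gv]
      split
      · have h1 : gv n ℓ i ⟨i+1, hi⟩ = 0 := gv_apply_hi i _ (by simp)
        have h2 : Ev n (i+1) ⟨i+1, hi⟩ = 1 := by rw [Ev_apply (i+1) hi]; simp
        have h3 : (0:ℝ) < Real.sqrt 3 := Real.sqrt_pos.mpr (by norm_num)
        simp only [PiLp.add_apply, PiLp.smul_apply, h1, h2, smul_eq_mul]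
        intro h; nlinarith
      · rw [Ev_apply (i+1) hi]; simp

lemma bv_li : LinearIndependent ℝ (bv n ℓ) := by
  rw [Fintype.linearIndependent_iff]
  intro g hg
  by_contra hc
  push_neg at hc
  obtain ⟨i0, hi0⟩ := hc
  -- take maximal index with g ≠ 0
  obtain ⟨i, hi, himax⟩ := Finset.exists_max_image (Finset.univ.filter fun i => g i ≠ 0)
    (fun i => (i : ℕ)) ⟨i0, by simpa using hi0⟩
  simp only [Finset.mem_filter, Finset.mem_univ, true_and] at hi himax
  have hcoord : (∑ j, g j • bv n ℓ j) i = 0 := by rw [hg]; rfl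
  rw [WithLp.ofLp_sum, Finset.sum_apply] at hcoord
  have : ∀ j : Fin n, j ∈ Finset.univ → (g j • bv n ℓ j) i = if j = i then g i * (bv n ℓ i i) else 0 := by
    intro j _
    by_cases hj : j = i
    · subst hj; simp
    · rw [if_neg hj]
      by_cases hgj : g j = 0
      · simp [hgj]
      · have : (j : ℕ) ≤ (i : ℕ) := himax j hgj
        have hji : (j : ℕ) < (i : ℕ) := lt_of_le_of_ne this (by simpa [Fin.ext_iff] using hj)
        have : bv n ℓ j i = 0 := gv_apply_hi (j : ℕ) i hji
        simp [this]
  rw [Finset.sum_congr rfl this, Finset.sum_ite_eq' Finset.univ i] at hcoord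
  simp at hcoord
  rcases hcoord with h | h
  · exact hi h
  · exact gv_diag (i : ℕ) i.2 (by simpa [Fin.eta, bv] using h)

/-- lattice point from integer coefficients -/
def X (n ℓ : ℕ) (c : Fin n → ℤ) : Evec n := ∑ i, (c i : ℝ) • bv n ℓ i

lemma X_zero : X n ℓ 0 = 0 := by simp [X]

lemma X_inj : Function.Injective (X n ℓ) := by
  intro c c' h
  have h2 : ∑ i, ((c i : ℝ) - (c' i : ℝ)) • bv n ℓ i = 0 := by
    simp only [sub_smul, Finset.sum_sub_distrib]
    rw [show (∑ i, (c i : ℝ) • bv n ℓ i) = X n ℓ c from rfl,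
      show (∑ i, (c' i : ℝ) • bv n ℓ i) = X n ℓ c' from rfl, h, sub_self]
  have := Fintype.linearIndependent_iff.mp (bv_li (n := n) (ℓ := ℓ)) _ h2
  funext i
  have hi := this i
  have : (c i : ℝ) = (c' i : ℝ) := by linarith
  exact_mod_cast this

lemma X_single (i : Fin n) : X n ℓ (Pi.single i 1) = bv n ℓ i := by
  rw [X, Finset.sum_eq_single i]
  · simp
  · intro j _ hj; rw [Pi.single_eq_of_ne hj]; simp
  · simp

lemma X_neg (c : Fin n → ℤ) : X n ℓ (-c) = - X n ℓ c := by
  simp [X, Finset.sum_neg_distrib]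

lemma X_sub (c c' : Fin n → ℤ) : X n ℓ (c - c') = X n ℓ c - X n ℓ c' := by
  simp [X, sub_smul, Finset.sum_sub_distrib]

lemma X_smul_single (i : Fin n) (a : ℤ) :
    X n ℓ (fun j => if j = i then a else 0) = (a : ℝ) • bv n ℓ i := by
  rw [X, Finset.sum_eq_single i]
  · simp
  · intro j _ hj; simp [if_neg hj]
  · simp

section T
variable (n ℓ : ℕ)

/-- the coefficient pattern of a chain-difference minimal vector -/
def chC (n : ℕ) (j : ℕ) : Fin n → ℤ :=
  fun i => if (i:ℕ) = j+1 then 1 else if (i:ℕ) = j then -1 else 0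

def T1 : Finset (Fin n → ℤ) := Finset.univ.image fun i : Fin n => Pi.single i (1:ℤ)
def T2 : Finset (Fin n → ℤ) := Finset.univ.image fun i : Fin n => -Pi.single i (1:ℤ)
def T3 : Finset (Fin n → ℤ) := (Finset.range ℓ).image (chC n)
def T4 : Finset (Fin n → ℤ) := (Finset.range ℓ).image (fun j => -chC n j)

def T : Finset (Fin n → ℤ) := T1 n ∪ T2 n ∪ T3 n ℓ ∪ T4 n ℓ

end T

section Main
variable {n ℓ : ℕ}

lemma inner_consec (j : ℕ) (hj : j < ℓ) (hl : ℓ < n) :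
    ⟪bv n ℓ ⟨j, by omega⟩, bv n ℓ ⟨j+1, by omega⟩⟫ = 1/2 := by
  have := inner_gv_succ (n := n) (ℓ := ℓ) j j (by omega) (by omega) (by omega)
  rw [gv_norm_sq j (by omega)] at this
  simpa [bv] using this

lemma chC_eq_single (j : ℕ) (hj : j + 1 < n) :
    chC n j = Pi.single (⟨j+1, hj⟩ : Fin n) 1 - Pi.single (⟨j, by omega⟩ : Fin n) 1 := by
  funext i
  have hfin1 : (i = (⟨j+1, hj⟩ : Fin n)) ↔ (i:ℕ) = j+1 := Fin.ext_iff
  have hfin2 : (i = (⟨j, by omega⟩ : Fin n)) ↔ (i:ℕ) = j := Fin.ext_iff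
  simp only [chC, Pi.sub_apply, Pi.single_apply, hfin1, hfin2]
  by_cases h1 : (i:ℕ) = j+1 <;> by_cases h2 : (i:ℕ) = j
  · omega
  all_goals simp [h1, h2]

/-- every element of T gives a vector of norm² 1 -/
lemma norm_sq_of_T (hl : ℓ < n) (c : Fin n → ℤ) (hc : c ∈ T n ℓ) :
    ⟪X n ℓ c, X n ℓ c⟫ = 1 := by
  have hch : ∀ j : ℕ, j < ℓ → ⟪X n ℓ (chC n j), X n ℓ (chC n j)⟫ = 1 := by
    intro j hj
    rw [chC_eq_single j (by omega), X_sub, X_single, X_single]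
    have hc2 : ⟪bv n ℓ ⟨j+1, by omega⟩, bv n ℓ ⟨j, by omega⟩⟫ = 1/2 := by
      rw [real_inner_comm]; exact inner_consec j hj hl
    rw [inner_sub_sub_self]
    rw [bv_norm_sq, bv_norm_sq, inner_consec j hj hl]
    linarith [hc2]
  simp only [T, Finset.mem_union] at hc
  rcases hc with ((hc | hc) | hc) | hc
  · obtain ⟨i, _, rfl⟩ := Finset.mem_image.mp hc
    rw [X_single]; exact bv_norm_sq i
  · obtain ⟨i, _, rfl⟩ := Finset.mem_image.mp hc
    rw [X_neg, X_single, inner_neg_neg]; exact bv_norm_sq i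
  · obtain ⟨j, hj, rfl⟩ := Finset.mem_image.mp hc
    exact hch j (Finset.mem_range.mp hj)
  · obtain ⟨j, hj, rfl⟩ := Finset.mem_image.mp hc
    rw [X_neg, inner_neg_neg]
    exact hch j (Finset.mem_range.mp hj)

lemma mem_T1 (i : Fin n) : Pi.single i (1:ℤ) ∈ T n ℓ := by
  simp only [T, Finset.mem_union]
  exact Or.inl <| Or.inl <| Or.inl <| Finset.mem_image.mpr ⟨i, Finset.mem_univ _, rfl⟩

lemma mem_T2 (i : Fin n) : -Pi.single i (1:ℤ) ∈ T n ℓ := by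
  simp only [T, Finset.mem_union]
  exact Or.inl <| Or.inl <| Or.inr <| Finset.mem_image.mpr ⟨i, Finset.mem_univ _, rfl⟩

lemma mem_T3 (j : ℕ) (hj : j < ℓ) : chC n j ∈ T n ℓ := by
  simp only [T, Finset.mem_union]
  exact Or.inl <| Or.inr <| Finset.mem_image.mpr ⟨j, Finset.mem_range.mpr hj, rfl⟩

lemma mem_T4 (j : ℕ) (hj : j < ℓ) : -chC n j ∈ T n ℓ := by
  simp only [T, Finset.mem_union]
  exact Or.inr <| Finset.mem_image.mpr ⟨j, Finset.mem_range.mpr hj, rfl⟩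

end Main

section Induct
variable {n ℓ : ℕ}

lemma X_split (c : Fin n → ℤ) (i0 : Fin n) :
    X n ℓ c = X n ℓ (Function.update c i0 0) + (c i0 : ℝ) • bv n ℓ i0 := by
  have h1 : X n ℓ (Function.update c i0 0) = ∑ i ∈ Finset.univ.erase i0, (c i : ℝ) • bv n ℓ i := by
    rw [X, ← Finset.sum_erase_add _ _ (Finset.mem_univ i0), Function.update_self]
    simp only [Int.cast_zero, zero_smul, add_zero]
    exact Finset.sum_congr rfl fun i hi => by
      rw [Function.update_of_ne (Finset.ne_of_mem_erase hi)]
  rw [X, ← Finset.sum_erase_add _ _ (Finset.mem_univ i0), h1]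

lemma inner_X_bv (c : Fin n → ℤ) (k : Fin n) :
    ⟪X n ℓ c, bv n ℓ k⟫ = ∑ i, (c i : ℝ) * ⟪bv n ℓ i, bv n ℓ k⟫ := by
  rw [X, sum_inner]
  exact Finset.sum_congr rfl fun i _ => real_inner_smul_left _ _ _

/-- single coefficient case -/
lemma single_case (i0 : Fin n) (c : Fin n → ℤ)
    (hc : c = fun j => if j = i0 then c i0 else 0) (ha : c i0 ≠ 0) :
    1 ≤ ⟪X n ℓ c, X n ℓ c⟫ ∧ (⟪X n ℓ c, X n ℓ c⟫ = 1 → c ∈ T n ℓ) := by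
  set a := c i0 with hadef
  have hX : X n ℓ c = (a : ℝ) • bv n ℓ i0 := by rw [hc]; exact X_smul_single i0 a
  have hQ : ⟪X n ℓ c, X n ℓ c⟫ = (a:ℝ)^2 := by
    rw [hX, real_inner_smul_left, real_inner_smul_right, bv_norm_sq]; ring
  have ha1 : (1:ℤ) ≤ |a| := Int.one_le_abs ha
  constructor
  · rw [hQ]
    have h2 : (1:ℝ) ≤ |(a:ℝ)| := by exact_mod_cast (by simpa using ha1)
    nlinarith [h2, sq_abs ((a:ℝ)), abs_nonneg ((a:ℝ))]
  · intro h1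
    rw [hQ] at h1
    have hsq : a^2 = 1 := by exact_mod_cast h1
    have habs : |a| = 1 := by nlinarith [sq_abs a, abs_nonneg a]
    rcases (abs_eq (by norm_num : (0:ℤ) ≤ 1)).mp habs with h | h
    · have : c = Pi.single i0 1 := by
        rw [hc]; funext j; rw [Pi.single_apply]
        by_cases hj : j = i0 <;> simp [hj, ← hadef, h]
      rw [this]; exact mem_T1 i0
    · have : c = -Pi.single i0 1 := by
        rw [hc]; funext j
        simp only [Pi.neg_apply, Pi.single_apply]
        by_cases hj : j = i0 <;> simp [hj, ← hadef, h]
      rw [this]; exact mem_T2 i0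

end Induct

section Arith

lemma arith_big (Q' s a : ℝ) (hq1 : 1 ≤ Q') (hs2 : s^2 ≤ Q') (h4 : 4 ≤ a^2) :
    3 ≤ Q' + 2*a*(1/2*s) + a^2 := by nlinarith [sq_nonneg (a + 2*s)]

lemma arith_one (Q' s a : ℝ) (hq1 : 1 ≤ Q') (hs2 : s^2 ≤ Q') (ha2 : a^2 = 1) :
    1 ≤ Q' + 2*a*(1/2*s) + a^2 ∧
      (Q' + 2*a*(1/2*s) + a^2 = 1 → Q' = 1 ∧ s = -a) := by
  have hprod : 0 ≤ (Q' - a*s) * (Q' + a*s) := by nlinarith [sq_nonneg (Q' - 1)]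
  constructor
  · nlinarith [hprod]
  · intro heq
    have has : a * s = -Q' := by linear_combination heq - ha2
    have h5 : (a*s)^2 = Q'^2 := by rw [has]; ring
    have h4 : s^2 = Q'^2 := by linear_combination h5 - s^2 * ha2
    have hQ'1 : Q' = 1 := by nlinarith [h4, hs2, hq1]
    refine ⟨hQ'1, ?_⟩
    linear_combination (-s) * ha2 + a * has + (-a) * hQ'1

lemma arith_orth (Q' a : ℝ) (hq1 : 1 ≤ Q') (ha2 : 1 ≤ a^2) :
    2 ≤ Q' + 2*a*0 + a^2 := by nlinarith

end Arith

section Key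
variable {n ℓ : ℕ}

lemma key (hl : ℓ < n) : ∀ r, r < n → ∀ c : Fin n → ℤ,
    (∀ i : Fin n, r < (i : ℕ) → c i = 0) → c ≠ 0 →
    1 ≤ ⟪X n ℓ c, X n ℓ c⟫ ∧ (⟪X n ℓ c, X n ℓ c⟫ = 1 → c ∈ T n ℓ) := by
  intro r
  induction r with
  | zero =>
      intro hr c hsupp hc0
      refine single_case ⟨0, hr⟩ c ?_ ?_
      · funext j
        by_cases hj : j = ⟨0, hr⟩
        · simp [hj]
        · have : (0:ℕ) < (j:ℕ) := by
            rcases Nat.eq_zero_or_pos (j:ℕ) with h | h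
            · exact absurd (Fin.ext h) hj
            · exact h
          simp [hj, hsupp j this]
      · intro h0
        apply hc0
        funext j
        by_cases hj : j = ⟨0, hr⟩
        · rw [hj]; exact h0
        · have : (0:ℕ) < (j:ℕ) := by
            rcases Nat.eq_zero_or_pos (j:ℕ) with h | h
            · exact absurd (Fin.ext h) hj
            · exact h
          exact hsupp j this
  | succ r ih =>
      intro hr c hsupp hc0
      have hrn : r < n := by omega
      set ir : Fin n := ⟨r+1, hr⟩ with hir
      set rf : Fin n := ⟨r, hrn⟩ with hrf
      have hirv : (ir:ℕ) = r+1 := rfl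
      have hrfv : (rf:ℕ) = r := rfl
      have hirrf : ir ≠ rf := by intro h; have := congrArg Fin.val h; rw [hirv, hrfv] at this; omega
      by_cases hcr : c ir = 0
      · -- top coefficient zero: reduce to r
        refine ih hrn c ?_ hc0
        intro i hi
        by_cases h : (i:ℕ) = r + 1
        · have : i = ir := Fin.ext h
          rw [this]; exact hcr
        · exact hsupp i (by omega)
      · set c' : Fin n → ℤ := Function.update c ir 0 with hc'def
        by_cases hc'0 : c' = 0
        · -- only top coefficient: single case
          refine single_case ir c ?_ hcr
          funext j
          by_cases hj : j = ir
          · simp [hj]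
          · have : c' j = 0 := by rw [hc'0]; rfl
            rw [hc'def, Function.update_of_ne hj] at this
            simp [hj, this]
        · -- main case
          have hsupp' : ∀ i : Fin n, r < (i:ℕ) → c' i = 0 := by
            intro i hi
            by_cases h : i = ir
            · rw [h, hc'def, Function.update_self]
            · rw [hc'def, Function.update_of_ne h]
              refine hsupp i ?_
              rcases Nat.lt_or_ge (r+1) (i:ℕ) with h' | h'
              · exact h'
              · exact absurd (Fin.ext (by omega)) h
          obtain ⟨hq1, heqc⟩ := ih hrn c' hsupp' hc'0
          set Q' : ℝ := ⟪X n ℓ c', X n ℓ c'⟫ with hQ'def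
          set a : ℝ := ((c ir : ℤ) : ℝ) with hadef
          have hsplit : X n ℓ c = X n ℓ c' + a • bv n ℓ ir := X_split c ir
          have hexp : ⟪X n ℓ c, X n ℓ c⟫ = Q' + 2 * a * ⟪X n ℓ c', bv n ℓ ir⟫ + a^2 := by
            rw [hsplit, real_inner_add_add_self, real_inner_smul_right,
              real_inner_smul_left, real_inner_smul_right, bv_norm_sq]
            ring
          have ha1 : (1:ℝ) ≤ |a| := by
            have : (1:ℤ) ≤ |c ir| := Int.one_le_abs hcr
            rw [hadef, ← Int.cast_abs]
            exact_mod_cast this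
          by_cases hcase : r + 1 ≤ ℓ
          · -- chain case
            set s : ℝ := ⟪X n ℓ c', bv n ℓ rf⟫ with hsdef
            have hhalf : ⟪X n ℓ c', bv n ℓ ir⟫ = (1/2) * s := by
              rw [hsdef, inner_X_bv, inner_X_bv, Finset.mul_sum]
              apply Finset.sum_congr rfl
              intro i _
              by_cases hci : c' i = 0
              · simp [hci]
              · have hile : (i:ℕ) ≤ r := by
                  by_contra h
                  exact hci (hsupp' i (by omega))
                have := inner_gv_succ (n := n) (ℓ := ℓ) (i:ℕ) r (by omega) hcase hr
                have hbv : ⟪bv n ℓ i, bv n ℓ ir⟫ = (1/2) * ⟪bv n ℓ i, bv n ℓ rf⟫ := this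
                rw [hbv]; ring
            have hs2 : s^2 ≤ Q' := by
              have h1 : |s| ≤ ‖X n ℓ c'‖ * ‖bv n ℓ rf‖ := abs_real_inner_le_norm _ _
              rw [bv_norm, mul_one] at h1
              have h2 : Q' = ‖X n ℓ c'‖^2 := by rw [hQ'def, real_inner_self_eq_norm_sq]
              nlinarith [abs_nonneg s, sq_abs s]
            rw [hexp, hhalf]
            by_cases h2a : 2 ≤ |a|
            · have h4 : 4 ≤ a^2 := by nlinarith [h2a, sq_abs a, abs_nonneg a]
              have h3 := arith_big Q' s a hq1 hs2 h4
              constructor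
              · linarith
              · intro heq; exfalso; linarith
            · -- |a| = 1
              push_neg at h2a
              have ha2 : a^2 = 1 := by
                have habs : |a| = 1 := by
                  have : ∃ b : ℤ, a = b := ⟨c ir, rfl⟩
                  obtain ⟨b, hb⟩ := this
                  rw [hb] at ha1 h2a ⊢
                  rw [← Int.cast_abs] at ha1 h2a ⊢
                  have hb1 : (1:ℤ) ≤ |b| := by exact_mod_cast ha1
                  have hb2 : |b| < 2 := by exact_mod_cast h2a
                  have : |b| = 1 := by omega
                  rw [this]; norm_num
                rw [← sq_abs a, habs]; norm_num
              obtain ⟨hge, hcharac⟩ := arith_one Q' s a hq1 hs2 ha2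
              constructor
              · exact hge
              · intro heq
                obtain ⟨hQ'1, hs⟩ := hcharac heq
                -- X c' + a • bv rf = 0
                have hzero : X n ℓ c' + a • bv n ℓ rf = 0 := by
                  have : ⟪X n ℓ c' + a • bv n ℓ rf, X n ℓ c' + a • bv n ℓ rf⟫ = 0 := by
                    rw [real_inner_add_add_self, real_inner_smul_right,
                      real_inner_smul_left, real_inner_smul_right, bv_norm_sq]
                    rw [← hQ'def, ← hsdef, hQ'1, hs]
                    linear_combination (-1 : ℝ) * ha2
                  exact inner_self_eq_zero.mp this
                have hc'eq : c' = fun j => if j = rf then -(c ir) else 0 := by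
                  apply X_inj
                  rw [X_smul_single]
                  rw [eq_neg_of_add_eq_zero_left hzero]
                  push_cast
                  rw [hadef]
                  module
                have hrl : r < ℓ := by omega
                have hcir : c ir = 1 ∨ c ir = -1 := by
                  have habs : |c ir| = 1 := by
                    have hb1 : (1:ℤ) ≤ |c ir| := Int.one_le_abs hcr
                    have hb2 : |c ir| < 2 := by
                      rw [hadef, ← Int.cast_abs] at h2a
                      exact_mod_cast h2a
                    omega
                  exact (abs_eq (by norm_num : (0:ℤ) ≤ 1)).mp habs
                have hceq : ∀ j : Fin n, c j = c ir * (chC n r j) := by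
                  intro j
                  by_cases hj1 : (j:ℕ) = r + 1
                  · have hj : j = ir := Fin.ext (by rw [hj1, hirv])
                    have hv : chC n r ir = 1 := by simp [chC, hirv]
                    rw [hj, hv]; ring
                  · have hjir : j ≠ ir := by
                      intro h; exact hj1 (by rw [h, hirv])
                    have hcj : c j = c' j := by rw [hc'def, Function.update_of_ne hjir]
                    by_cases hj2 : (j:ℕ) = r
                    · have hj : j = rf := Fin.ext (by rw [hj2, hrfv])
                      rw [hj] at hcj ⊢
                      have hv : chC n r rf = -1 := by simp [chC, hrfv]
                      rw [hcj, hc'eq, hv]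
                      simp
                    · have hjrf : j ≠ rf := by
                        intro h; exact hj2 (by rw [h, hrfv])
                      have hv : chC n r j = 0 := by simp [chC, hj1, hj2]
                      rw [hcj, hc'eq, hv]
                      simp [if_neg hjrf]
                rcases hcir with h | h
                · have : c = chC n r := by
                    funext j; rw [hceq j, h, one_mul]
                  rw [this]; exact mem_T3 r hrl
                · have : c = -chC n r := by
                    funext j; rw [hceq j, h]; simp
                  rw [this]; exact mem_T4 r hrl
          · -- orthogonal case: ℓ < r+1
            have hzero : ⟪X n ℓ c', bv n ℓ ir⟫ = 0 := by
              rw [inner_X_bv]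
              apply Finset.sum_eq_zero
              intro i _
              by_cases hci : c' i = 0
              · simp [hci]
              · have hile : (i:ℕ) ≤ r := by
                  by_contra h
                  exact hci (hsupp' i (by omega))
                have : ⟪bv n ℓ i, bv n ℓ ir⟫ = 0 :=
                  inner_gv_zero (i:ℕ) (r+1) (by omega) (by omega) hr
                rw [this, mul_zero]
            have ha2 : 1 ≤ a^2 := by nlinarith [ha1, sq_abs a, abs_nonneg a]
            rw [hexp, hzero]
            constructor
            · nlinarith [ha2, hq1]
            · intro heq; exfalso; nlinarith [ha2, hq1]

end Key

section MinVecsSec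
variable {n ℓ : ℕ}

lemma key_all (hl : ℓ < n) (c : Fin n → ℤ) (hc : c ≠ 0) :
    1 ≤ ⟪X n ℓ c, X n ℓ c⟫ ∧ (⟪X n ℓ c, X n ℓ c⟫ = 1 → c ∈ T n ℓ) := by
  refine key hl (n-1) (by omega) c ?_ hc
  intro i hi
  exact absurd i.2 (by omega)

lemma mem_lattice (x : Evec n) : x ∈ latticeOf (bv n ℓ) ↔ ∃ c, x = X n ℓ c := Iff.rfl

lemma X_ne_zero (hl : ℓ < n) (c : Fin n → ℤ) (hc : c ≠ 0) : X n ℓ c ≠ 0 := by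
  intro h
  have h1 := (key_all hl c hc).1
  rw [h] at h1
  simp at h1
  linarith

lemma minVecs_eq (hl : ℓ < n) :
    minVecs (latticeOf (bv n ℓ)) = X n ℓ '' (T n ℓ : Set (Fin n → ℤ)) := by
  have hn : 0 < n := by omega
  ext x
  constructor
  · rintro ⟨⟨c, hxc⟩, hx0, hmin⟩
    have hxc' : x = X n ℓ c := hxc
    subst hxc'
    have hc : c ≠ 0 := by rintro rfl; rw [X_zero] at hx0; exact hx0 rfl
    obtain ⟨h1, h2⟩ := key_all hl c hc
    have hb0mem : bv n ℓ ⟨0, hn⟩ ∈ latticeOf (bv n ℓ) :=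
      ⟨Pi.single ⟨0, hn⟩ 1, (X_single _).symm⟩
    have hb0n : bv n ℓ ⟨0, hn⟩ ≠ 0 := by
      intro h
      have := bv_norm (n := n) (ℓ := ℓ) ⟨0, hn⟩
      rw [h, norm_zero] at this
      norm_num at this
    have hle := hmin _ hb0mem hb0n
    rw [bv_norm] at hle
    have hsq : ⟪X n ℓ c, X n ℓ c⟫ ≤ 1 := by
      rw [real_inner_self_eq_norm_sq]
      nlinarith [norm_nonneg (X n ℓ c)]
    exact ⟨c, h2 (le_antisymm hsq h1), rfl⟩
  · rintro ⟨c, hcT, rfl⟩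
    have hcT' : c ∈ T n ℓ := hcT
    have h1 : ⟪X n ℓ c, X n ℓ c⟫ = 1 := norm_sq_of_T hl c hcT'
    refine ⟨⟨c, rfl⟩, ?_, ?_⟩
    · intro h
      rw [h] at h1
      simp at h1
    · rintro y ⟨c', hyc⟩ hy0
      have hyc' : y = X n ℓ c' := hyc
      subst hyc'
      have hc' : c' ≠ 0 := by rintro rfl; rw [X_zero] at hy0; exact hy0 rfl
      have h2 := (key_all hl c' hc').1
      have hx : ‖X n ℓ c‖^2 = 1 := by rw [← real_inner_self_eq_norm_sq, h1]
      have hy : 1 ≤ ‖X n ℓ c'‖^2 := by rw [← real_inner_self_eq_norm_sq]; exact h2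
      nlinarith [norm_nonneg (X n ℓ c), norm_nonneg (X n ℓ c')]

lemma T1_card : (T1 n).card = n := by
  rw [T1, Finset.card_image_of_injective _ ?_, Finset.card_univ, Fintype.card_fin]
  intro i i' h
  by_contra hne
  dsimp only at h
  have := congrFun h i
  rw [Pi.single_eq_same, Pi.single_eq_of_ne hne] at this
  norm_num at this

lemma T2_card : (T2 n).card = n := by
  rw [T2, Finset.card_image_of_injective _ ?_, Finset.card_univ, Fintype.card_fin]
  intro i i' h
  by_contra hne
  dsimp only at h
  have := congrFun h i
  simp only [Pi.neg_apply] at this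
  rw [Pi.single_eq_same, Pi.single_eq_of_ne hne] at this
  norm_num at this

lemma chC_mk (j k : ℕ) (hk : k < n) :
    chC n j ⟨k, hk⟩ = if k = j+1 then 1 else if k = j then -1 else 0 := rfl

lemma single_mk (i : Fin n) (k : ℕ) (hk : k < n) :
    (Pi.single i (1:ℤ) : Fin n → ℤ) ⟨k, hk⟩ = if k = (i:ℕ) then 1 else 0 := by
  rw [Pi.single_apply]
  by_cases h : k = (i:ℕ)
  · rw [if_pos (by simpa [Fin.ext_iff] using h), if_pos h]
  · rw [if_neg (by simpa [Fin.ext_iff] using h), if_neg h]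

lemma T3_card (hl : ℓ < n) : (T3 n ℓ).card = ℓ := by
  rw [T3, Finset.card_image_of_injOn ?_, Finset.card_range]
  intro j hj j' hj' h
  simp only [Finset.coe_range, Set.mem_Iio] at hj hj'
  have := congrFun h ⟨j+1, by omega⟩
  rw [chC_mk, chC_mk, if_pos rfl] at this
  split_ifs at this <;> omega

lemma T4_card (hl : ℓ < n) : (T4 n ℓ).card = ℓ := by
  rw [T4, Finset.card_image_of_injOn ?_, Finset.card_range]
  intro j hj j' hj' h
  simp only [Finset.coe_range, Set.mem_Iio] at hj hj'
  dsimp only at h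
  have := congrFun h ⟨j+1, by omega⟩
  simp only [Pi.neg_apply] at this
  rw [chC_mk, chC_mk, if_pos rfl] at this
  split_ifs at this <;> omega

lemma T_card (hl : ℓ < n) : (T n ℓ).card = 2*n + 2*ℓ := by
  have d12 : Disjoint (T1 n) (T2 n) := by
    rw [Finset.disjoint_left]
    rintro f hf1 hf2
    obtain ⟨i, _, rfl⟩ := Finset.mem_image.mp hf1
    obtain ⟨i', _, heq⟩ := Finset.mem_image.mp hf2
    have := congrFun heq i
    simp only [Pi.neg_apply, Pi.single_eq_same] at this
    rw [Pi.single_apply] at this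
    split_ifs at this <;> omega
  have d3 : ∀ f ∈ T1 n ∪ T2 n, f ∉ T3 n ℓ := by
    rintro f hf hf3
    obtain ⟨j, hj, rfl⟩ := Finset.mem_image.mp hf3
    rw [Finset.mem_range] at hj
    rcases Finset.mem_union.mp hf with hf1 | hf1 <;>
      obtain ⟨i, _, heq⟩ := Finset.mem_image.mp hf1
    · have := congrFun heq ⟨j, by omega⟩
      rw [single_mk, chC_mk] at this
      split_ifs at this <;> omega
    · have := congrFun heq ⟨j+1, by omega⟩
      simp only [Pi.neg_apply] at this
      rw [single_mk, chC_mk] at this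
      split_ifs at this <;> omega
  have d4 : ∀ f ∈ T1 n ∪ T2 n ∪ T3 n ℓ, f ∉ T4 n ℓ := by
    rintro f hf hf4
    obtain ⟨j, hj, rfl⟩ := Finset.mem_image.mp hf4
    rw [Finset.mem_range] at hj
    rcases Finset.mem_union.mp hf with hf1 | hf3
    · rcases Finset.mem_union.mp hf1 with hf1 | hf1 <;>
        obtain ⟨i, _, heq⟩ := Finset.mem_image.mp hf1
      · have := congrFun heq ⟨j+1, by omega⟩
        simp only [Pi.neg_apply] at this
        rw [single_mk, chC_mk] at this
        split_ifs at this <;> omega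
      · have := congrFun heq ⟨j, by omega⟩
        simp only [Pi.neg_apply] at this
        rw [single_mk, chC_mk] at this
        split_ifs at this <;> omega
    · obtain ⟨j', hj', heq⟩ := Finset.mem_image.mp hf3
      rw [Finset.mem_range] at hj'
      have h1 := congrFun heq ⟨j+1, by omega⟩
      simp only [Pi.neg_apply] at h1
      rw [chC_mk, chC_mk, if_pos rfl] at h1
      have hjj' : j' = j + 1 := by split_ifs at h1 <;> omega
      have h2 := congrFun heq ⟨j'+1, by omega⟩
      simp only [Pi.neg_apply] at h2
      rw [chC_mk, chC_mk, if_pos rfl] at h2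
      split_ifs at h2 <;> omega
  rw [T, Finset.card_union_of_disjoint (Finset.disjoint_left.mpr d4),
    Finset.card_union_of_disjoint (Finset.disjoint_left.mpr d3),
    Finset.card_union_of_disjoint d12,
    T1_card, T2_card, T3_card hl, T4_card hl]
  ring

end MinVecsSec

section WNOsec
variable {n ℓ : ℕ}

lemma inner_Ev_span_zero (i : Fin n) (w : Evec n)
    (hw : w ∈ Submodule.span ℝ (bv n ℓ '' {j : Fin n | j < i})) :
    ⟪Ev n (i:ℕ), w⟫ = 0 := by
  induction hw using Submodule.span_induction with
  | mem x hx =>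
      obtain ⟨j, hj, rfl⟩ := hx
      have hj' : (j:ℕ) < (i:ℕ) := hj
      rw [real_inner_comm, inner_Ev _ _ i.2]
      exact gv_apply_hi (j:ℕ) ⟨(i:ℕ), i.2⟩ (by simpa using hj')
  | zero => simp
  | add x y hx hy ihx ihy => rw [inner_add_right, ihx, ihy]; norm_num
  | smul a x hx ihx => rw [real_inner_smul_right, ihx]; norm_num

lemma gv_linked (k : ℕ) (hk1 : 1 ≤ k) (hkl : k ≤ ℓ) :
    gv n ℓ k = (1/2 : ℝ) • gv n ℓ (k-1) + (Real.sqrt 3 / 2) • Ev n k := by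
  obtain ⟨k', rfl⟩ : ∃ k', k = k' + 1 := ⟨k - 1, by omega⟩
  rw [gv, if_pos hkl]
  norm_num

lemma proj_linked (i : Fin n) (hi : 0 < (i:ℕ)) (hil : (i:ℕ) ≤ ℓ) :
    (orthogonalProjection (Submodule.span ℝ (bv n ℓ '' {j : Fin n | j < i}))
      (bv n ℓ i) : Evec n) = (1/2 : ℝ) • gv n ℓ ((i:ℕ)-1) := by
  apply Submodule.eq_starProjection_of_mem_of_inner_eq_zero
  · apply Submodule.smul_mem
    apply Submodule.subset_span
    refine ⟨⟨(i:ℕ)-1, by omega⟩, ?_, rfl⟩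
    show ((⟨(i:ℕ)-1, by omega⟩ : Fin n) : ℕ) < (i:ℕ)
    simp
    omega
  · intro w hw
    have hdiff : bv n ℓ i - (1/2 : ℝ) • gv n ℓ ((i:ℕ)-1) = (Real.sqrt 3 / 2) • Ev n (i:ℕ) := by
      rw [bv, gv_linked (i:ℕ) hi hil]
      abel
    rw [hdiff, real_inner_smul_left, inner_Ev_span_zero i w hw, mul_zero]

lemma proj_unlinked (i : Fin n) (hil : ℓ < (i:ℕ)) :
    (orthogonalProjection (Submodule.span ℝ (bv n ℓ '' {j : Fin n | j < i}))
      (bv n ℓ i) : Evec n) = 0 := by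
  apply Submodule.eq_starProjection_of_mem_of_inner_eq_zero
  · exact Submodule.zero_mem _
  · intro w hw
    have hbv : bv n ℓ i - 0 = Ev n (i:ℕ) := by
      rw [sub_zero, bv]
      obtain ⟨k', hk'⟩ : ∃ k', (i:ℕ) = k' + 1 := ⟨(i:ℕ) - 1, by omega⟩
      rw [hk', gv, if_neg (by omega)]
    rw [hbv]
    exact inner_Ev_span_zero i w hw

lemma arccos_half : Real.arccos (1/2) = Real.pi / 3 := by
  have h := Real.arccos_cos (x := Real.pi / 3) (by positivity) (by linarith [Real.pi_pos])
  rw [Real.cos_pi_div_three] at h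
  exact h

lemma wno : WeaklyNearlyOrth (bv n ℓ) := by
  intro i hi
  rw [subAngle, bv_norm, div_one]
  by_cases hcase : (i:ℕ) ≤ ℓ
  · rw [proj_linked i hi hcase]
    rw [norm_smul, gv_norm ((i:ℕ)-1) (by omega)]
    norm_num
    rw [arccos_half]
  · push_neg at hcase
    rw [proj_unlinked i hcase, norm_zero, Real.arccos_zero]
    linarith [Real.pi_pos]

lemma wr (hl : ℓ < n) : IsWellRounded (latticeOf (bv n ℓ)) := by
  haveI : Nonempty (Fin n) := ⟨⟨0, by omega⟩⟩
  rw [IsWellRounded]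
  have hsub : Set.range (bv n ℓ) ⊆ minVecs (latticeOf (bv n ℓ)) := by
    rintro x ⟨i, rfl⟩
    rw [minVecs_eq hl]
    exact ⟨Pi.single i 1, mem_T1 i, X_single i⟩
  have htop : Submodule.span ℝ (Set.range (bv n ℓ)) = ⊤ :=
    (bv_li (n := n) (ℓ := ℓ)).span_eq_top_of_card_eq_finrank
      (by simp [finrank_euclideanSpace_fin])
  exact le_antisymm le_top (htop ▸ Submodule.span_mono hsub)

lemma master (hl : ℓ < n) :
    ∃ b : Fin n → Evec n, LinearIndependent ℝ b ∧ WeaklyNearlyOrth b ∧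
      IsWellRounded (latticeOf b) ∧ (minVecs (latticeOf b)).ncard = 2*n + 2*ℓ :=
  ⟨bv n ℓ, bv_li, wno, wr hl, by
    rw [minVecs_eq hl, Set.ncard_image_of_injective _ (X_inj (n := n) (ℓ := ℓ)),
      Set.ncard_coe_finset, T_card hl]⟩

end WNOsec


end S12

end


/-- intermediate counts of minimal vectors for well-rounded
lattices with weakly nearly orthogonal bases; every even number between `3n`
and `4n - 2` occurs. -/
theorem stmt_12 (n : ℕ) (hn : 3 ≤ n) :
    (∀ m : ℕ, 1 ≤ m → (Even n → 2 * m ≤ n - 2) → (¬ Even n → 2 * m ≤ n - 1) →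
      ∃ b : Fin n → Evec n, LinearIndependent ℝ b ∧ WeaklyNearlyOrth b ∧
        IsWellRounded (latticeOf b) ∧
        (minVecs (latticeOf b)).ncard =
          if Even n then 3 * n + 2 * m else 3 * n - 1 + 2 * m) ∧
    (∀ k : ℕ, 3 * n ≤ k → k ≤ 4 * n - 2 → Even k →
      ∃ b : Fin n → Evec n, LinearIndependent ℝ b ∧ WeaklyNearlyOrth b ∧
        IsWellRounded (latticeOf b) ∧ (minVecs (latticeOf b)).ncard = k) := by
  constructor
  · intro m hm1 hme hmo
    by_cases heven : Even n
    · obtain ⟨t, ht⟩ := id heven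
      have hbound := hme heven
      have hl : t + m < n := by omega
      obtain ⟨b, hli, hwno, hwr, hcard⟩ := S12.master hl
      refine ⟨b, hli, hwno, hwr, ?_⟩
      rw [if_pos heven, hcard]
      omega
    · have hodd : Odd n := Nat.odd_iff.mpr (Nat.not_even_iff.mp heven)
      obtain ⟨t, ht⟩ := hodd
      have hbound := hmo heven
      have hl : t + m < n := by omega
      obtain ⟨b, hli, hwno, hwr, hcard⟩ := S12.master hl
      refine ⟨b, hli, hwno, hwr, ?_⟩
      rw [if_neg heven, hcard]
      omega
  · intro k hk1 hk2 hke
    obtain ⟨t, ht⟩ := hke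
    have hl : t - n < n := by omega
    obtain ⟨b, hli, hwno, hwr, hcard⟩ := S12.master hl
    exact ⟨b, hli, hwno, hwr, by rw [hcard]; omega⟩
end

section
/- For every n ≥ 3, no well-rounded lattice in ℝⁿ possessing a weakly nearly orthogonal basis is perfect. -/
open scoped RealInnerProductSpace
open Submodule Metric MeasureTheory

noncomputable section Stmt14Aux

namespace Stmt14Aux

lemma latticeOf_sub {n : ℕ} {b : Fin n → Evec n} {x y : Evec n}
    (hx : x ∈ latticeOf b) (hy : y ∈ latticeOf b) : x - y ∈ latticeOf b := by
  obtain ⟨c, rfl⟩ := hx; obtain ⟨d, rfl⟩ := hy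
  refine ⟨c - d, ?_⟩
  rw [← Finset.sum_sub_distrib]
  congr 1; funext i
  push_cast
  simp [sub_smul]

lemma latticeOf_neg {n : ℕ} {b : Fin n → Evec n} {x : Evec n}
    (hx : x ∈ latticeOf b) : -x ∈ latticeOf b := by
  obtain ⟨c, rfl⟩ := hx
  exact ⟨-c, by simp [← Finset.sum_neg_distrib]⟩

lemma latticeOf_basis {n : ℕ} (b : Fin n → Evec n) (i : Fin n) : b i ∈ latticeOf b := by
  refine ⟨fun j => if j = i then 1 else 0, ?_⟩
  simp [ite_smul, Finset.sum_ite_eq']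

lemma minVecs_neg {n : ℕ} {b : Fin n → Evec n} {x : Evec n}
    (hx : x ∈ minVecs (latticeOf b)) : -x ∈ minVecs (latticeOf b) := by
  obtain ⟨h1, h2, h3⟩ := hx
  exact ⟨latticeOf_neg h1, neg_ne_zero.2 h2, by simpa using h3⟩

lemma inner_coord {n : ℕ} (x y : Evec n) : ⟪x, y⟫ = ∑ i, x i * y i := by
  rw [PiLp.inner_apply]; simp [RCLike.inner_apply, mul_comm]

/-- Equality case analysis: two vectors at the same height `w` above a hyperplane,
both of norm `m`, with `‖w‖² ≥ (3/4)m²`, whose difference has norm `≥ m`,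
have opposite horizontal parts. -/
lemma pair_core {E : Type*} [NormedAddCommGroup E] [InnerProductSpace ℝ E]
    {w a a' : E} {m : ℝ} (hm : 0 < m)
    (haw : ⟪a, w⟫ = 0) (ha'w : ⟪a', w⟫ = 0)
    (hxa : ‖a + w‖ = m) (hx'a : ‖a' + w‖ = m)
    (hwsq : 3 / 4 * m ^ 2 ≤ ‖w‖ ^ 2)
    (hd : m ≤ ‖a - a'‖) : a = -a' := by
  have hna : ‖a‖ ^ 2 ≤ m ^ 2 / 4 := by
    have h1 : ‖a + w‖ ^ 2 = ‖a‖ ^ 2 + 2 * ⟪a, w⟫ + ‖w‖ ^ 2 := norm_add_sq_real a w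
    rw [hxa, haw] at h1
    linarith
  have hna' : ‖a'‖ ^ 2 ≤ m ^ 2 / 4 := by
    have h1 : ‖a' + w‖ ^ 2 = ‖a'‖ ^ 2 + 2 * ⟪a', w⟫ + ‖w‖ ^ 2 := norm_add_sq_real a' w
    rw [hx'a, ha'w] at h1
    linarith
  have hm2 : (0:ℝ) ≤ m / 2 := by linarith
  have hq : (m / 2) ^ 2 = m ^ 2 / 4 := by ring
  have hale : ‖a‖ ≤ m / 2 :=
    le_of_pow_le_pow_left₀ (n := 2) two_ne_zero hm2 (by rw [hq]; exact hna)
  have hale' : ‖a'‖ ≤ m / 2 :=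
    le_of_pow_le_pow_left₀ (n := 2) two_ne_zero hm2 (by rw [hq]; exact hna')
  have htri : ‖a - a'‖ ≤ ‖a‖ + ‖a'‖ := norm_sub_le a a'
  have haeq : ‖a‖ = m / 2 := by linarith
  have ha'eq : ‖a'‖ = m / 2 := by linarith
  have hdeq : ‖a - a'‖ = m := by linarith
  have hinner_aa : ⟪a, a'⟫ = -(m ^ 2 / 4) := by
    have h20 : ‖a - a'‖ ^ 2 = ‖a‖ ^ 2 - 2 * ⟪a, a'⟫ + ‖a'‖ ^ 2 := norm_sub_sq_real a a'
    rw [hdeq, haeq, ha'eq] at h20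
    linarith
  have heqcase : ⟪a, -a'⟫ = ‖a‖ * ‖-a'‖ := by
    rw [inner_neg_right, hinner_aa, haeq, norm_neg, ha'eq]; ring
  have hsmul := inner_eq_norm_mul_iff_real.1 heqcase
  rw [norm_neg, ha'eq, haeq] at hsmul
  have hm2ne : (m / 2 : ℝ) ≠ 0 := by
    intro h; rw [h] at hm2; linarith [hm]
  exact smul_right_injective E hm2ne hsmul

lemma coef_core {c : ℤ} {m t : ℝ} (hm : 0 < m) (ht : 0 < t)
    (hwsq : 3 / 4 * m ^ 2 ≤ t ^ 2) (hCS : |(c : ℝ)| * t ^ 2 ≤ m * t) :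
    c = -1 ∨ c = 0 ∨ c = 1 := by
  have h3 : |(c : ℝ)| * t ≤ m := by
    have h4 : (|(c : ℝ)| * t) * t ≤ m * t := by
      calc (|(c : ℝ)| * t) * t = |(c : ℝ)| * t ^ 2 := by ring
      _ ≤ m * t := hCS
    exact le_of_mul_le_mul_right h4 ht
  have h5 : (c : ℝ) ^ 2 * t ^ 2 ≤ m ^ 2 := by
    have h6 : (|(c : ℝ)| * t) ^ 2 ≤ m ^ 2 :=
      pow_le_pow_left₀ (mul_nonneg (abs_nonneg _) ht.le) h3 2
    calc (c : ℝ) ^ 2 * t ^ 2 = (|(c : ℝ)| * t) ^ 2 := by rw [mul_pow, sq_abs]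
    _ ≤ m ^ 2 := h6
  have h7 : (c : ℝ) ^ 2 * (3 / 4 * m ^ 2) ≤ (c : ℝ) ^ 2 * t ^ 2 :=
    mul_le_mul_of_nonneg_left hwsq (sq_nonneg _)
  have h9 : (0:ℝ) < 3 / 4 * m ^ 2 := by
    have := mul_pos hm hm
    calc (0:ℝ) < 3 / 4 * (m * m) := by linarith
    _ = 3 / 4 * m ^ 2 := by ring
  have h10 : (c : ℝ) ^ 2 * (3 / 4 * m ^ 2) ≤ m ^ 2 := le_trans h7 h5
  have h11 : (c : ℝ) ^ 2 ≤ m ^ 2 / (3 / 4 * m ^ 2) := (le_div_iff₀ h9).2 h10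
  have h12 : m ^ 2 / (3 / 4 * m ^ 2) = 4 / 3 := by
    rw [div_eq_iff (ne_of_gt h9)]; ring
  rw [h12] at h11
  have h13 : (c : ℝ) ^ 2 < 2 := by linarith
  have h14 : c ^ 2 < 2 := by exact_mod_cast h13
  have h15 : -1 ≤ c ∧ c ≤ 1 := by
    constructor <;> nlinarith [sq_nonneg (c + 1), sq_nonneg (c - 1)]
  omega

lemma mulVec_special {n : ℕ} (v w : Fin n → ℝ) (S T : ℝ)
    (hS : ∑ j, w j * w j = S) (hT : ∑ j, v j * w j = T) (hSne : S ≠ 0) :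
    (Matrix.of fun i j => S⁻¹ * (v i * w j + w i * v j) - (T / S ^ 2) * (w i * w j)).mulVec w
      = v := by
  funext i
  rw [Matrix.mulVec, dotProduct]
  have hterm : ∀ j, (Matrix.of fun i j =>
        S⁻¹ * (v i * w j + w i * v j) - (T / S ^ 2) * (w i * w j)) i j * w j
      = S⁻¹ * v i * (w j * w j) + S⁻¹ * w i * (v j * w j)
        - (T / S ^ 2) * w i * (w j * w j) := by
    intro j
    simp only [Matrix.of_apply]
    ring
  simp_rw [hterm]
  rw [Finset.sum_sub_distrib, Finset.sum_add_distrib, ← Finset.mul_sum, ← Finset.mul_sum,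
    ← Finset.mul_sum, hS, hT]
  field_simp
  ring

lemma mulVec_outer {n : ℕ} (x w : Fin n → ℝ) :
    (Matrix.of fun i j => x i * x j).mulVec w = fun i => (∑ j, x j * w j) * x i := by
  funext i
  rw [Matrix.mulVec, dotProduct]
  have hterm : ∀ j, (Matrix.of fun i j => x i * x j) i j * w j = x i * (x j * w j) := by
    intro j; simp only [Matrix.of_apply]; ring
  simp_rw [hterm]
  rw [← Finset.mul_sum]
  ring

end Stmt14Aux

end Stmt14Aux
set_option maxHeartbeats 1000000 in
/-- for `n ≥ 3`, no well-rounded lattice with a weakly nearly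
orthogonal basis is perfect. -/
theorem stmt_14 (n : ℕ) (hn : 3 ≤ n) (b : Fin n → Evec n)
    (hb : LinearIndependent ℝ b) (hW : WeaklyNearlyOrth b)
    (hWR : IsWellRounded (latticeOf b)) :
    ¬ IsPerfect (latticeOf b) := by
  intro hperf
  classical
  -- existence of a minimal vector
  have hne : (minVecs (latticeOf b)).Nonempty := by
    by_contra h
    rw [Set.not_nonempty_iff_eq_empty] at h
    rw [IsWellRounded, h, Submodule.span_empty] at hWR
    have h2 : Module.finrank ℝ (⊤ : Submodule ℝ (Evec n)) = n := by
      rw [finrank_top, finrank_euclideanSpace, Fintype.card_fin]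
    rw [← hWR, finrank_bot] at h2
    omega
  obtain ⟨x₀, hx₀⟩ := hne
  set m := ‖x₀‖ with hm
  have hmpos : 0 < m := norm_pos_iff.2 hx₀.2.1
  have hmin : ∀ y ∈ latticeOf b, y ≠ 0 → m ≤ ‖y‖ := hx₀.2.2
  have hnormmin : ∀ x ∈ minVecs (latticeOf b), ‖x‖ = m := fun x hx =>
    le_antisymm (hx.2.2 x₀ hx₀.1 hx₀.2.1) (hmin x hx.1 hx.2.1)
  -- the geometric setup
  set last : Fin n := ⟨n - 1, by omega⟩ with hlast
  set V : Submodule ℝ (Evec n) := Submodule.span ℝ (b '' {j | j < last}) with hV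
  set Kp := orthogonalProjection V with hKp
  set w : Evec n := b last - (Kp (b last) : Evec n) with hw
  have hwV : w ∈ Vᗮ := sub_starProjection_mem_orthogonal (K := V) (b last)
  have hinner0 : ∀ u ∈ V, ⟪u, w⟫ = 0 := fun u hu => (Submodule.mem_orthogonal V w).1 hwV u hu
  have hbj : ∀ j : Fin n, j ≠ last → b j ∈ V := by
    intro j hj
    apply Submodule.subset_span
    have h1 : (j : ℕ) ≠ n - 1 := fun h => hj (Fin.ext (by simp [hlast, h]))
    have h2 := j.isLt
    exact ⟨j, by simp only [Set.mem_setOf_eq, Fin.lt_def, hlast]; omega, rfl⟩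
  have hblast_ne : b last ≠ 0 := hb.ne_zero last
  have hbl_pos : 0 < ‖b last‖ := norm_pos_iff.2 hblast_ne
  have hKbV : (Kp (b last) : Evec n) ∈ V := (Kp (b last)).2
  have hKbw : ⟪(Kp (b last) : Evec n), w⟫ = 0 := hinner0 _ hKbV
  have hsplit : b last = (Kp (b last) : Evec n) + w := by rw [hw]; abel
  have hbw : ⟪b last, w⟫ = ‖w‖ ^ 2 := by
    conv_lhs => rw [hsplit]
    rw [inner_add_left, hKbw, real_inner_self_eq_norm_sq, zero_add]
  have hdecomp : ‖b last‖ ^ 2 = ‖(Kp (b last) : Evec n)‖ ^ 2 + ‖w‖ ^ 2 := by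
    conv_lhs => rw [hsplit]
    rw [norm_add_sq_real, hKbw]; ring
  have hang : Real.pi / 3 ≤ subAngle (b last) V := hW last (by simp [hlast]; omega)
  have hr_le1 : ‖(Kp (b last) : Evec n)‖ / ‖b last‖ ≤ 1 := by
    rw [div_le_one hbl_pos]
    have h2 : ‖(Kp (b last) : Evec n)‖ ^ 2 ≤ ‖b last‖ ^ 2 := by
      have := sq_nonneg ‖w‖; linarith
    exact le_of_pow_le_pow_left₀ (n := 2) two_ne_zero (norm_nonneg _) h2
  have hcos : ‖(Kp (b last) : Evec n)‖ / ‖b last‖ ≤ 1 / 2 := by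
    rw [subAngle, ← hKp] at hang
    have hr0 : (0:ℝ) ≤ ‖(Kp (b last) : Evec n)‖ / ‖b last‖ :=
      div_nonneg (norm_nonneg _) (norm_nonneg _)
    have h1 := Real.cos_le_cos_of_nonneg_of_le_pi
      (le_of_lt (by positivity : (0:ℝ) < Real.pi / 3)) (Real.arccos_le_pi _) hang
    rw [Real.cos_arccos (by linarith) hr_le1, Real.cos_pi_div_three] at h1
    exact h1
  have hKb_le : ‖(Kp (b last) : Evec n)‖ ≤ ‖b last‖ / 2 := by
    rw [div_le_div_iff₀ hbl_pos (by norm_num)] at hcos; linarith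
  have hw_sq : 3 / 4 * ‖b last‖ ^ 2 ≤ ‖w‖ ^ 2 := by
    have h2 : ‖(Kp (b last) : Evec n)‖ ^ 2 ≤ (‖b last‖ / 2) ^ 2 :=
      pow_le_pow_left₀ (norm_nonneg _) hKb_le 2
    have h3 : (‖b last‖ / 2) ^ 2 = ‖b last‖ ^ 2 / 4 := by ring
    linarith
  have hm_le_bl : m ≤ ‖b last‖ := hmin _ (Stmt14Aux.latticeOf_basis b last) hblast_ne
  have hw_sq_m : 3 / 4 * m ^ 2 ≤ ‖w‖ ^ 2 := by
    have : m ^ 2 ≤ ‖b last‖ ^ 2 := pow_le_pow_left₀ hmpos.le hm_le_bl 2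
    linarith
  have hwpos : 0 < ‖w‖ := by
    have h4 : 0 < m ^ 2 := pow_pos hmpos 2
    have h5 : 0 < ‖w‖ ^ 2 := by linarith
    have h6 : ‖w‖ ≠ 0 := fun h => by rw [h] at h5; simp at h5
    exact lt_of_le_of_ne (norm_nonneg w) (Ne.symm h6)
  have hw2ne : ‖w‖ ^ 2 ≠ 0 := by positivity
  -- the coefficient of `b last` in any lattice vector
  have key : ∀ x ∈ latticeOf b, ∃ c : ℤ, ⟪x, w⟫ = (c : ℝ) * ‖w‖ ^ 2 ∧
      x - (Kp x : Evec n) = (c : ℝ) • w := by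
    rintro x ⟨c, rfl⟩
    refine ⟨c last, ?_, ?_⟩
    · rw [sum_inner, Finset.sum_eq_single_of_mem last (Finset.mem_univ _)
        (fun i _ hi => by rw [real_inner_smul_left, hinner0 _ (hbj i hi), mul_zero]),
        real_inner_smul_left, hbw]
    · have hKx : (Kp (∑ i, (c i : ℝ) • b i) : Evec n)
          = ∑ i, (c i : ℝ) • (Kp (b i) : Evec n) := by
        rw [map_sum]
        push_cast
        simp
      rw [hKx, ← Finset.sum_sub_distrib]
      have : ∀ i, (c i : ℝ) • b i - (c i : ℝ) • (Kp (b i) : Evec n)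
          = (c i : ℝ) • (b i - (Kp (b i) : Evec n)) := fun i => (smul_sub _ _ _).symm
      simp_rw [this]
      rw [Finset.sum_eq_single_of_mem last (Finset.mem_univ _)
        (fun i _ hi => by
          rw [show ((Kp (b i) : Evec n)) = b i from starProjection_eq_self_iff.2 (hbj i hi), sub_self, smul_zero]), hw]
  -- minimal vectors have coefficient -1, 0 or 1
  have hcoefmin : ∀ x ∈ minVecs (latticeOf b), ∃ c : ℤ, (c = -1 ∨ c = 0 ∨ c = 1) ∧
      ⟪x, w⟫ = (c : ℝ) * ‖w‖ ^ 2 ∧ x - (Kp x : Evec n) = (c : ℝ) • w := by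
    intro x hx
    obtain ⟨c, h1, h2⟩ := key x hx.1
    refine ⟨c, ?_, h1, h2⟩
    have hxm : ‖x‖ = m := hnormmin x hx
    have hCS : |⟪x, w⟫| ≤ ‖x‖ * ‖w‖ := abs_real_inner_le_norm x w
    rw [h1, hxm, abs_mul, abs_of_nonneg (sq_nonneg ‖w‖)] at hCS
    exact Stmt14Aux.coef_core hmpos hwpos hw_sq_m hCS
  -- two distinct minimal vectors with coefficient one sum to 2w
  have hpair : ∀ x ∈ minVecs (latticeOf b), ∀ x' ∈ minVecs (latticeOf b),
      ⟪x, w⟫ = ‖w‖ ^ 2 → ⟪x', w⟫ = ‖w‖ ^ 2 → x ≠ x' → x + x' = (2 : ℝ) • w := by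
    intro x hx x' hx' hxw hx'w hne'
    obtain ⟨c, _, h1, h2⟩ := hcoefmin x hx
    obtain ⟨c', _, h1', h2'⟩ := hcoefmin x' hx'
    have hc1 : (c : ℝ) = 1 := by
      have h3 : (c : ℝ) * ‖w‖ ^ 2 = 1 * ‖w‖ ^ 2 := by
        rw [one_mul]; exact h1.symm.trans hxw
      exact mul_right_cancel₀ hw2ne h3
    have hc1' : (c' : ℝ) = 1 := by
      have h3 : (c' : ℝ) * ‖w‖ ^ 2 = 1 * ‖w‖ ^ 2 := by
        rw [one_mul]; exact h1'.symm.trans hx'w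
      exact mul_right_cancel₀ hw2ne h3
    rw [hc1, one_smul] at h2
    rw [hc1', one_smul] at h2'
    have hxa : x = w + (Kp x : Evec n) := sub_eq_iff_eq_add.1 h2
    have hx'a : x' = w + (Kp x' : Evec n) := sub_eq_iff_eq_add.1 h2'
    have haw : ⟪((Kp x : Evec n)), w⟫ = 0 := hinner0 _ (Kp x).2
    have ha'w : ⟪((Kp x' : Evec n)), w⟫ = 0 := hinner0 _ (Kp x').2
    have hxnorm : ‖(Kp x : Evec n) + w‖ = m := by
      rw [add_comm, ← hxa]; exact hnormmin x hx
    have hx'norm : ‖(Kp x' : Evec n) + w‖ = m := by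
      rw [add_comm, ← hx'a]; exact hnormmin x' hx'
    have hsubL : x - x' ∈ latticeOf b := Stmt14Aux.latticeOf_sub hx.1 hx'.1
    have hsubne : x - x' ≠ 0 := sub_ne_zero.2 hne'
    have hdiff : x - x' = (Kp x : Evec n) - (Kp x' : Evec n) := by
      have h5 : x - (Kp x : Evec n) = x' - (Kp x' : Evec n) := by rw [h2, h2']
      exact sub_eq_sub_iff_sub_eq_sub.1 h5
    have hmle : m ≤ ‖(Kp x : Evec n) - (Kp x' : Evec n)‖ := by
      rw [← hdiff]; exact hmin _ hsubL hsubne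
    have haa' : (Kp x : Evec n) = -(Kp x' : Evec n) :=
      Stmt14Aux.pair_core hmpos haw ha'w hxnorm hx'norm hw_sq_m hmle
    rw [hxa, hx'a, haa', two_smul]
    abel
  -- the at-most-two covering
  set P : Set (Evec n) := {x | x ∈ minVecs (latticeOf b) ∧ ⟪x, w⟫ = ‖w‖ ^ 2} with hP
  obtain ⟨x₁, x₂, hcov⟩ : ∃ x₁ x₂ : Evec n, P ⊆ {x₁, x₂} := by
    by_cases hPne : P.Nonempty
    · obtain ⟨x₁, hx₁⟩ := hPne
      refine ⟨x₁, (2 : ℝ) • w - x₁, ?_⟩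
      intro x hxP
      by_cases hx1 : x = x₁
      · exact Or.inl hx1
      · right
        have := hpair x hxP.1 x₁ hx₁.1 hxP.2 hx₁.2 hx1
        rw [Set.mem_singleton_iff, eq_sub_iff_add_eq]
        exact this
    · exact ⟨0, 0, fun x hx => absurd ⟨x, hx⟩ hPne⟩
  set U : Submodule ℝ (Evec n) := Submodule.span ℝ ({x₁, x₂} : Set (Evec n)) with hU
  have hUx : ∀ x ∈ minVecs (latticeOf b), ⟪x, w⟫ • x ∈ U := by
    intro x hx
    obtain ⟨c, hc, h1, _⟩ := hcoefmin x hx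
    rcases hc with rfl | rfl | rfl
    · have hnx : -x ∈ minVecs (latticeOf b) := Stmt14Aux.minVecs_neg hx
      have hnxP : -x ∈ P := by
        refine ⟨hnx, ?_⟩
        rw [inner_neg_left, h1]; push_cast; ring
      have h4 : (-x : Evec n) ∈ U := Submodule.subset_span (hcov hnxP)
      have hxU : x ∈ U := by
        have := U.neg_mem h4; simpa using this
      exact U.smul_mem _ hxU
    · rw [h1]; push_cast
      rw [zero_mul, zero_smul]; exact U.zero_mem
    · have hxP : x ∈ P := ⟨hx, by rw [h1]; push_cast; ring⟩
      exact U.smul_mem _ (Submodule.subset_span (hcov hxP))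
  have hUneq : U ≠ ⊤ := by
    intro htop
    have hfin : ({x₁, x₂} : Set (Evec n)).Finite := Set.toFinite _
    haveI := hfin.fintype
    have h1 : Module.finrank ℝ U ≤ ({x₁, x₂} : Set (Evec n)).toFinset.card :=
      finrank_span_le_card _
    have hcard : ({x₁, x₂} : Set (Evec n)).toFinset.card ≤ 2 := by
      rw [Set.toFinset_insert, Set.toFinset_singleton]
      exact (Finset.card_insert_le _ _).trans (by simp)
    have h2 : Module.finrank ℝ U = n := by
      rw [htop, finrank_top, finrank_euclideanSpace, Fintype.card_fin]
    omega
  obtain ⟨v, hv⟩ : ∃ v : Evec n, v ∉ U := by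
    by_contra h
    push_neg at h
    exact hUneq (Submodule.eq_top_iff'.2 h)
  -- inner products in coordinates
  have hsumww : ∑ j, w j * w j = ‖w‖ ^ 2 := by
    rw [← Stmt14Aux.inner_coord w w, real_inner_self_eq_norm_sq]
  have hsumvw : ∑ j, v j * w j = ⟪v, w⟫ := (Stmt14Aux.inner_coord v w).symm
  -- the witness matrix
  set A : Matrix (Fin n) (Fin n) ℝ := Matrix.of fun i j =>
    (‖w‖ ^ 2)⁻¹ * (v i * w j + w i * v j) - (⟪v, w⟫ / (‖w‖ ^ 2) ^ 2) * (w i * w j) with hA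
  have hAsymm : A.IsSymm := by
    rw [Matrix.IsSymm]
    ext i j
    simp only [hA, Matrix.transpose_apply, Matrix.of_apply]
    ring
  have hAw : A.mulVec (fun j => w j) = fun j => v j :=
    Stmt14Aux.mulVec_special (fun j => v j) (fun j => w j) (‖w‖ ^ 2) ⟪v, w⟫ hsumww hsumvw hw2ne
  -- the linear map M ↦ M ⬝ w
  set Φ : Matrix (Fin n) (Fin n) ℝ →ₗ[ℝ] Evec n :=
    { toFun := fun M => (WithLp.toLp 2 (M.mulVec (fun j => w j)) : Evec n)
      map_add' := fun M N => by rw [Matrix.add_mulVec]; rfl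
      map_smul' := fun r M => by rw [Matrix.smul_mulVec]; rfl } with hPhi
  have hmem := hperf A hAsymm
  have h2 := Submodule.apply_mem_span_image_of_mem_span Φ hmem
  have h3 : Submodule.span ℝ
      (Φ '' ((fun x : Evec n => Matrix.of fun i j => x i * x j) '' minVecs (latticeOf b)))
      ≤ U := by
    rw [Submodule.span_le]
    rintro y ⟨My, ⟨x, hx, rfl⟩, rfl⟩
    have hGx : Φ (Matrix.of fun i j => x i * x j) = ⟪x, w⟫ • x := by
      ext i
      show (Matrix.of fun i j => x i * x j).mulVec (fun j => w j) i = ⟪x, w⟫ * x i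
      rw [congrFun (Stmt14Aux.mulVec_outer (fun j => x j) (fun j => w j)) i,
        ← Stmt14Aux.inner_coord]
    rw [hGx]
    exact hUx x hx
  have hvU : v ∈ U := by
    have hPhiA : Φ A = v := by
      ext i
      show (A.mulVec (fun j => w j)) i = v i
      rw [congrFun hAw i]
    rw [← hPhiA]
    exact h3 h2
  exact hv hvU
end

section
/- Let L be a well-rounded lattice in ℝⁿ possessing a nearly orthogonal basis, and let x₁,…,xₙ be any n linearly independent vectors in S(L). Then x₁,…,xₙ form a basis of L, i.e., span_ℤ{x₁,…,xₙ} = L. -/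
open scoped RealInnerProductSpace
open Submodule Metric MeasureTheory

-- Auxiliary lemmas
lemma arith1' {a m s : ℝ} (hm : 0 < m) (ha : m ≤ a)
    (h : (s - a^2)^2 ≤ a^2/4 * (m^2 - 2*s + a^2)) : m^2/2 ≤ s := by
  have h2 : m^2 ≤ a^2 := by nlinarith
  have hkey : (3*a^2/4 - m^2/2)^2 ≥ a^2*m^2/4 - 3*a^4/16 := by
    nlinarith [mul_nonneg (sub_nonneg.2 h2) (show (0:ℝ) ≤ a^2 - m^2/3 by nlinarith)]
  have hred : (3*a^2/4 - s)^2 ≤ a^2*m^2/4 - 3*a^4/16 := by nlinarith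
  by_contra hs
  push_neg at hs
  have hpos : 0 < 3*a^2/4 - m^2/2 := by nlinarith
  have h3 : 3*a^2/4 - m^2/2 < 3*a^2/4 - s := by linarith
  have := pow_lt_pow_left₀ h3 hpos.le (two_ne_zero)
  nlinarith

lemma arith_pair' {a c q m : ℝ} (hm : 0 < m) (ha : m ≤ a) (hc : m ≤ c)
    (hq : |q| ≤ a*c/2) (h : m^2 = a^2+c^2+2*q) : a = m ∧ c = m ∧ q = -(m^2)/2 := by
  have h1 := abs_le.1 hq
  have hac : a*c ≤ m^2 := by nlinarith [sq_nonneg (a - c)]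
  have hac2 : m^2 ≤ a*c := by nlinarith
  have haceq : a*c = m^2 := le_antisymm hac hac2
  have haa : a = c := by nlinarith [sq_nonneg (a - c)]
  have ham : a = m := by nlinarith
  refine ⟨ham, by nlinarith, by nlinarith⟩

lemma proj_le_of_angle' {n : ℕ} {v : Evec n} (hv : v ≠ 0) {V : Submodule ℝ (Evec n)}
    (h : Real.pi / 3 ≤ subAngle v V) :
    ‖(orthogonalProjection V v : Evec n)‖ ≤ ‖v‖ / 2 := by
  have hvpos : (0:ℝ) < ‖v‖ := norm_pos_iff.2 hv
  set r : ℝ := ‖(orthogonalProjection V v : Evec n)‖ / ‖v‖ with hr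
  have hr0 : 0 ≤ r := div_nonneg (norm_nonneg _) (norm_nonneg _)
  have hple : ‖(orthogonalProjection V v : Evec n)‖ ≤ ‖v‖ := by
    calc ‖(orthogonalProjection V v : Evec n)‖ ≤ ‖orthogonalProjection V‖ * ‖v‖ :=
          (orthogonalProjection V).le_opNorm v
    _ ≤ 1 * ‖v‖ :=
          mul_le_mul_of_nonneg_right (orthogonalProjection_norm_le V) (norm_nonneg _)
    _ = ‖v‖ := one_mul _
  have hr1 : r ≤ 1 := by rw [hr, div_le_one hvpos]; exact hple
  have hcos : Real.cos (Real.arccos r) ≤ Real.cos (Real.pi/3) :=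
    Real.cos_le_cos_of_nonneg_of_le_pi (by positivity) (Real.arccos_le_pi r) h
  rw [Real.cos_arccos (by linarith) hr1, Real.cos_pi_div_three] at hcos
  rw [hr, div_le_div_iff₀ hvpos (by norm_num : (0:ℝ) < 2)] at hcos
  linarith [hcos]

lemma inner_le_of_proj' {n : ℕ} {v : Evec n} {V : Submodule ℝ (Evec n)}
    (h : ‖(orthogonalProjection V v : Evec n)‖ ≤ ‖v‖ / 2) {w : Evec n} (hw : w ∈ V) :
    |⟪v, w⟫| ≤ ‖v‖ / 2 * ‖w‖ := by
  have h0 : ⟪v - (orthogonalProjection V v : Evec n), w⟫ = 0 :=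
    V.starProjection_inner_eq_zero v w hw
  have heq : ⟪v, w⟫ = ⟪(orthogonalProjection V v : Evec n), w⟫ := by
    have hsub := inner_sub_left (𝕜 := ℝ) v ((orthogonalProjection V v : Evec n)) w
    rw [h0] at hsub; linarith [hsub]
  rw [heq]
  calc |⟪(orthogonalProjection V v : Evec n), w⟫|
      ≤ ‖(orthogonalProjection V v : Evec n)‖ * ‖w‖ := abs_real_inner_le_norm _ _
  _ ≤ ‖v‖/2 * ‖w‖ := mul_le_mul_of_nonneg_right h (norm_nonneg _)

lemma NO_angle' {n : ℕ} {b : Fin n → Evec n} (hNO : NearlyOrth b) (i : Fin n) (hn : 2 ≤ n) :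
    Real.pi / 3 ≤ subAngle (b i) (Submodule.span ℝ (b '' {k | k ≠ i})) := by
  have hn1 : n - 1 < n := by omega
  set last : Fin n := ⟨n-1, hn1⟩ with hlast
  set σ : Equiv.Perm (Fin n) := Equiv.swap last i with hσ
  have h1 := hNO σ last (by simp [hlast]; omega)
  have hσlast : σ last = i := Equiv.swap_apply_left _ _
  have himg : (b ∘ σ) '' {j | j < last} = b '' {k | k ≠ i} := by
    rw [Set.image_comp]
    have hset : {j : Fin n | j < last} = {last}ᶜ := by
      ext j
      simp only [Set.mem_setOf_eq, Set.mem_compl_iff, Set.mem_singleton_iff]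
      constructor
      · intro h he; rw [he] at h; exact lt_irrefl _ h
      · intro h
        have hj := j.isLt
        have hne : (j:ℕ) ≠ n - 1 := fun hc => h (Fin.ext (by simpa [hlast] using hc))
        simp only [hlast, Fin.lt_def]
        omega
    rw [hset, Set.image_compl_eq σ.bijective, Set.image_singleton, hσlast]
    rfl
  rw [himg] at h1
  simpa [Function.comp_apply, hσlast] using h1

lemma latticeOf_eq_span {n : ℕ} (y : Fin n → Evec n) :
    latticeOf y = (Submodule.span ℤ (Set.range y) : Set (Evec n)) := by
  ext v
  rw [SetLike.mem_coe, mem_span_range_iff_exists_fun]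
  constructor
  · rintro ⟨c, rfl⟩
    exact ⟨c, (Finset.sum_congr rfl fun i _ => Int.cast_smul_eq_zsmul ℝ _ _).symm⟩
  · rintro ⟨c, rfl⟩
    exact ⟨c, (Finset.sum_congr rfl fun i _ => Int.cast_smul_eq_zsmul ℝ _ _).symm⟩
set_option maxHeartbeats 4000000 in
/-- any `n` linearly independent minimal vectors of a well-rounded
lattice with a nearly orthogonal basis form a basis of the lattice. -/
theorem stmt_15 {n : ℕ} (b : Fin n → Evec n) (hb : LinearIndependent ℝ b)
    (hNO : NearlyOrth b) (hWR : IsWellRounded (latticeOf b))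
    (x : Fin n → Evec n) (hx : ∀ i, x i ∈ minVecs (latticeOf b))
    (hxli : LinearIndependent ℝ x) :
    latticeOf x = latticeOf b := by
  classical
  rcases Nat.eq_zero_or_pos n with hn0 | hn
  · subst hn0
    ext v
    constructor
    · rintro ⟨c, rfl⟩; exact ⟨c, by simp⟩
    · rintro ⟨c, rfl⟩; exact ⟨c, by simp⟩
  -- basic facts about the minimal norm
  set m : ℝ := ‖x ⟨0, hn⟩‖ with hm_def
  have hxmem : ∀ t, x t ∈ latticeOf b := fun t => (hx t).1
  have hxne : ∀ t, x t ≠ 0 := fun t => (hx t).2.1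
  have hmin : ∀ v ∈ latticeOf b, v ≠ 0 → m ≤ ‖v‖ := (hx ⟨0, hn⟩).2.2
  have hxnorm : ∀ t, ‖x t‖ = m := fun t =>
    le_antisymm ((hx t).2.2 _ (hxmem ⟨0, hn⟩) (hxne _)) (hmin _ (hxmem t) (hxne t))
  have hmpos : 0 < m := by rw [hm_def]; exact norm_pos_iff.2 (hxne _)
  have hbL : ∀ i, b i ∈ latticeOf b := by
    intro i
    refine ⟨fun j => if j = i then 1 else 0, ?_⟩
    rw [Finset.sum_eq_single i]
    · simp
    · intro j _ hj; simp [hj]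
    · intro h; exact absurd (Finset.mem_univ i) h
  have hbm : ∀ i, m ≤ ‖b i‖ := fun i => hmin _ (hbL i) (hb.ne_zero i)
  -- coordinates of the minimal vectors
  choose c hc using fun t => (hx t).1
  -- inner product bound from near orthogonality
  have hinner : ∀ i : Fin n, ∀ w ∈ Submodule.span ℝ (b '' {k | k ≠ i}),
      |⟪b i, w⟫| ≤ ‖b i‖ / 2 * ‖w‖ := by
    intro i w hw
    rcases le_or_gt 2 n with h2 | h2
    · exact inner_le_of_proj' (proj_le_of_angle' (hb.ne_zero i) (NO_angle' hNO i h2)) hw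
    · have hall : ∀ k : Fin n, k = i := by
        intro k
        apply Fin.ext
        have := k.isLt
        have := i.isLt
        omega
      have hempty : {k : Fin n | k ≠ i} = ∅ := by ext k; simp [hall k]
      rw [hempty, Set.image_empty, Submodule.span_empty, Submodule.mem_bot] at hw
      subst hw
      simp
  have hpair : ∀ i j : Fin n, j ≠ i → |⟪b i, b j⟫| ≤ ‖b i‖ / 2 * ‖b j‖ := fun i j hj =>
    hinner i (b j) (Submodule.subset_span ⟨j, hj, rfl⟩)
  have hwmem : ∀ t i, x t - (c t i : ℝ) • b i ∈ Submodule.span ℝ (b '' {k | k ≠ i}) := by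
    intro t i
    have hsplit : x t - (c t i : ℝ) • b i = ∑ j ∈ Finset.univ.erase i, (c t j : ℝ) • b j := by
      rw [hc t, ← Finset.add_sum_erase _ _ (Finset.mem_univ i)]
      abel
    rw [hsplit]
    exact Submodule.sum_mem _ fun j hj =>
      Submodule.smul_mem _ _ (Submodule.subset_span ⟨j, Finset.ne_of_mem_erase hj, rfl⟩)
  -- all coordinates lie in {-1,0,1}
  have hP1 : ∀ t i, c t i = 1 ∨ c t i = 0 ∨ c t i = -1 := by
    intro t i
    set γ : ℝ := (c t i : ℝ) with hγ
    set w : Evec n := x t - γ • b i with hwdef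
    have hxw : x t = γ • b i + w := by rw [hwdef]; abel
    have hiw : |⟪b i, w⟫| ≤ ‖b i‖ / 2 * ‖w‖ := hinner i w (hwmem t i)
    have hexp : m ^ 2 = γ ^ 2 * ‖b i‖ ^ 2 + 2 * (γ * ⟪b i, w⟫) + ‖w‖ ^ 2 := by
      rw [← hxnorm t, hxw, norm_add_sq_real, norm_smul, real_inner_smul_left, mul_pow]
      simp only [Real.norm_eq_abs, sq_abs]
      try ring
    have habs : -(|γ| * (‖b i‖ / 2 * ‖w‖)) ≤ γ * ⟪b i, w⟫ := by
      have h1 : |γ * ⟪b i, w⟫| ≤ |γ| * (‖b i‖ / 2 * ‖w‖) := by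
        rw [abs_mul]; exact mul_le_mul_of_nonneg_left hiw (abs_nonneg _)
      linarith [(abs_le.1 h1).1]
    have hbound : 3 / 4 * γ ^ 2 * ‖b i‖ ^ 2 ≤ m ^ 2 := by
      nlinarith [sq_nonneg (‖w‖ - |γ| * ‖b i‖ / 2), sq_abs γ, norm_nonneg w, abs_nonneg γ,
        norm_nonneg (b i)]
    have hγ2 : γ ^ 2 ≤ 4 / 3 := by
      have hb2 : m ^ 2 ≤ ‖b i‖ ^ 2 := by nlinarith [hbm i, hmpos, norm_nonneg (b i)]
      nlinarith [sq_nonneg γ, hmpos, mul_pos hmpos hmpos,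
        mul_le_mul_of_nonneg_left hb2 (mul_nonneg (by norm_num : (0:ℝ) ≤ 3/4) (sq_nonneg γ))]
    have hint : (c t i) ^ 2 ≤ 1 := by
      by_contra hcon
      push_neg at hcon
      have h2le : (2 : ℤ) ≤ (c t i) ^ 2 := by linarith
      have h2r : (2 : ℝ) ≤ γ ^ 2 := by
        rw [hγ]
        exact_mod_cast (by exact_mod_cast h2le : (2:ℝ) ≤ ((c t i)^2 : ℤ))
      linarith
    have hle1 : c t i ≤ 1 := by nlinarith [sq_nonneg (c t i - 1)]
    have hge1 : -1 ≤ c t i := by nlinarith [sq_nonneg (c t i + 1)]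
    omega
  have hpm : ∀ t i, c t i ≠ 0 → c t i = 1 ∨ c t i = -1 := by
    intro t i h
    rcases hP1 t i with h1 | h1 | h1
    exacts [Or.inl h1, absurd h1 h, Or.inr h1]
  -- the quantitative bound: each nonzero coordinate contributes at least m²/2
  have hS : ∀ t i, c t i ≠ 0 → m ^ 2 / 2 ≤ (c t i : ℝ) * ⟪x t, b i⟫ := by
    intro t i hne
    have hγpm := hpm t i hne
    set γ : ℝ := (c t i : ℝ) with hγ
    have hγ2 : γ ^ 2 = 1 := by rcases hγpm with h | h <;> simp [hγ, h]
    have hγabs : |γ| = 1 := by rcases hγpm with h | h <;> simp [hγ, h]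
    set w : Evec n := x t - γ • b i with hwdef
    have hiw : |⟪b i, w⟫| ≤ ‖b i‖ / 2 * ‖w‖ := hinner i w (hwmem t i)
    set s : ℝ := γ * ⟪x t, b i⟫ with hs
    have hbiw : γ * ⟪b i, w⟫ = s - ‖b i‖ ^ 2 := by
      have h1 : ⟪b i, w⟫ = ⟪b i, x t⟫ - γ * ‖b i‖ ^ 2 := by
        rw [hwdef, inner_sub_right, real_inner_smul_right, real_inner_self_eq_norm_sq]
      rw [h1, hs, real_inner_comm (x t) (b i)]
      linear_combination (-(‖b i‖ ^ 2)) * hγ2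
    have hwnorm : ‖w‖ ^ 2 = m ^ 2 - 2 * s + ‖b i‖ ^ 2 := by
      rw [hwdef, norm_sub_sq_real, real_inner_smul_right, norm_smul, hxnorm t, mul_pow, hs]
      simp only [Real.norm_eq_abs, sq_abs]
      linear_combination (‖b i‖ ^ 2) * hγ2
    have habs2 : |s - ‖b i‖ ^ 2| ≤ ‖b i‖ / 2 * ‖w‖ := by
      rw [← hbiw, abs_mul, hγabs, one_mul]
      exact hiw
    have hsq : (s - ‖b i‖ ^ 2) ^ 2 ≤ ‖b i‖ ^ 2 / 4 * (m ^ 2 - 2 * s + ‖b i‖ ^ 2) := by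
      have h1 := pow_le_pow_left₀ (abs_nonneg _) habs2 2
      rw [sq_abs] at h1
      calc (s - ‖b i‖ ^ 2) ^ 2 ≤ (‖b i‖ / 2 * ‖w‖) ^ 2 := h1
        _ = ‖b i‖ ^ 2 / 4 * ‖w‖ ^ 2 := by ring
        _ = ‖b i‖ ^ 2 / 4 * (m ^ 2 - 2 * s + ‖b i‖ ^ 2) := by rw [hwnorm]
    exact arith1' hmpos (hbm i) hsq
  have hsum : ∀ t, ∑ i, (c t i : ℝ) * ⟪x t, b i⟫ = m ^ 2 := by
    intro t
    have h1 : ⟪x t, x t⟫ = m ^ 2 := by rw [real_inner_self_eq_norm_sq, hxnorm t]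
    calc ∑ i, (c t i : ℝ) * ⟪x t, b i⟫ = ⟪x t, ∑ i, (c t i : ℝ) • b i⟫ := by
          rw [inner_sum]
          exact Finset.sum_congr rfl fun i _ => (real_inner_smul_right _ _ _).symm
      _ = m ^ 2 := by rw [← hc t, h1]
  -- no minimal vector has three nonzero coordinates
  have hP2 : ∀ t, ∀ i j k : Fin n, i ≠ j → i ≠ k → j ≠ k →
      c t i ≠ 0 → c t j ≠ 0 → c t k ≠ 0 → False := by
    intro t i j k hij hik hjk hi hj hk
    have hf0 : ∀ l, 0 ≤ (c t l : ℝ) * ⟪x t, b l⟫ := by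
      intro l
      by_cases h : c t l = 0
      · simp [h]
      · nlinarith [hS t l h, hmpos]
    have hsum3 : ((c t i : ℝ) * ⟪x t, b i⟫ + (c t j : ℝ) * ⟪x t, b j⟫)
        + (c t k : ℝ) * ⟪x t, b k⟫ ≤ ∑ l, (c t l : ℝ) * ⟪x t, b l⟫ := by
      have hsub := Finset.sum_le_sum_of_subset_of_nonneg
        (Finset.subset_univ ({i, j, k} : Finset (Fin n))) (fun l _ _ => hf0 l)
      rwa [Finset.sum_insert (by simp [hij, hik]), Finset.sum_insert (by simp [hjk]),
        Finset.sum_singleton, ← add_assoc] at hsub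
    have h1 := hS t i hi
    have h2 := hS t j hj
    have h3 := hS t k hk
    have h4 := hsum t
    nlinarith [hmpos]
  -- a minimal vector supported on a pair
  have hcollapse : ∀ t, ∀ i j : Fin n, i ≠ j → c t i ≠ 0 → c t j ≠ 0 →
      x t = (c t i : ℝ) • b i + (c t j : ℝ) • b j := by
    intro t i j hij hi hj
    have hzero : ∀ k, k ≠ i → k ≠ j → c t k = 0 := by
      intro k hki hkj
      by_contra hk
      exact hP2 t i j k hij (Ne.symm hki) (Ne.symm hkj) hi hj hk
    have hss : ∑ k ∈ ({i, j} : Finset (Fin n)), (c t k : ℝ) • b k = ∑ k, (c t k : ℝ) • b k := by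
      apply Finset.sum_subset (Finset.subset_univ _)
      intro k _ hk
      have hki : k ≠ i := fun h => hk (by simp [h])
      have hkj : k ≠ j := fun h => hk (by simp [h])
      rw [hzero k hki hkj]; simp
    rw [hc t, ← hss, Finset.sum_pair hij]
  -- rigidity of pair-supported minimal vectors
  have hP3 : ∀ t, ∀ i j : Fin n, i ≠ j → c t i ≠ 0 → c t j ≠ 0 →
      ‖b i‖ = m ∧ ‖b j‖ = m ∧ (c t i : ℝ) * (c t j : ℝ) * ⟪b i, b j⟫ = -(m ^ 2) / 2 := by
    intro t i j hij hi hj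
    have hxt := hcollapse t i j hij hi hj
    have hα2 : ((c t i : ℝ)) ^ 2 = 1 := by rcases hpm t i hi with h | h <;> simp [h]
    have hβ2 : ((c t j : ℝ)) ^ 2 = 1 := by rcases hpm t j hj with h | h <;> simp [h]
    have hαabs : |(c t i : ℝ)| = 1 := by rcases hpm t i hi with h | h <;> simp [h]
    have hβabs : |(c t j : ℝ)| = 1 := by rcases hpm t j hj with h | h <;> simp [h]
    have hexp : m ^ 2 = ‖b i‖ ^ 2 + ‖b j‖ ^ 2 + 2 * ((c t i : ℝ) * (c t j : ℝ) * ⟪b i, b j⟫) := by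
      have hthis := norm_add_sq_real ((c t i : ℝ) • b i) ((c t j : ℝ) • b j)
      rw [← hxt, hxnorm t, norm_smul, norm_smul, real_inner_smul_left, real_inner_smul_right,
        mul_pow, mul_pow] at hthis
      simp only [Real.norm_eq_abs, sq_abs] at hthis
      linear_combination hthis + ‖b i‖ ^ 2 * hα2 + ‖b j‖ ^ 2 * hβ2
    have hq : |(c t i : ℝ) * (c t j : ℝ) * ⟪b i, b j⟫| ≤ ‖b i‖ * ‖b j‖ / 2 := by
      rw [abs_mul, abs_mul, hαabs, hβabs, one_mul, one_mul]
      have := hpair i j (Ne.symm hij)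
      linarith
    exact arith_pair' hmpos (hbm i) (hbm j) hq hexp
  -- two distinct minimal vectors cannot be supported on the same pair
  have hsame : ∀ u t, ∀ i j : Fin n, u ≠ t → i ≠ j → c t i ≠ 0 → c t j ≠ 0 →
      c u i ≠ 0 → c u j ≠ 0 → False := by
    intro u t i j hut hij hti htj hui huj
    obtain ⟨_, _, hq1⟩ := hP3 t i j hij hti htj
    obtain ⟨_, _, hq2⟩ := hP3 u i j hij hui huj
    have hp : ⟪b i, b j⟫ ≠ 0 := by
      intro h0
      rw [h0, mul_zero] at hq1
      nlinarith [hmpos]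
    have hprodR : (c t i : ℝ) * (c t j : ℝ) = (c u i : ℝ) * (c u j : ℝ) := by
      have hmul : ((c t i : ℝ) * (c t j : ℝ) - (c u i : ℝ) * (c u j : ℝ)) * ⟪b i, b j⟫ = 0 := by
        linear_combination hq1 - hq2
      rcases mul_eq_zero.1 hmul with h | h
      · linarith
      · exact absurd h hp
    have hprod : c t i * c t j = c u i * c u j := by exact_mod_cast hprodR
    have hcc : c t i * c t i = 1 := by rcases hpm t i hti with h | h <;> rw [h] <;> norm_num
    have hcc2 : c u i * c u i = 1 := by rcases hpm u i hui with h | h <;> rw [h] <;> norm_num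
    set δ : ℤ := c u i * c t i with hδ
    have hδi : δ * c t i = c u i := by
      have h1 : δ * c t i = c u i * (c t i * c t i) := by rw [hδ]; ring
      rw [hcc, mul_one] at h1
      exact h1
    have hδj : δ * c t j = c u j := by
      have h1 : δ * c t j = (c t i * c t j) * c u i := by rw [hδ]; ring
      rw [hprod] at h1
      have h2 : c u i * c u j * c u i = (c u i * c u i) * c u j := by ring
      rw [h1, h2, hcc2, one_mul]
    have hxu_eq : x u = (δ : ℝ) • x t := by
      rw [hcollapse u i j hij hui huj, hcollapse t i j hij hti htj, smul_add, smul_smul, smul_smul]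
      have e1 : (δ : ℝ) * (c t i : ℝ) = (c u i : ℝ) := by exact_mod_cast hδi
      have e2 : (δ : ℝ) * (c t j : ℝ) = (c u j : ℝ) := by exact_mod_cast hδj
      rw [e1, e2]
    have hmemspan : x u ∈ Submodule.span ℝ (x '' {t}) := by
      rw [hxu_eq]
      exact Submodule.smul_mem _ _ (Submodule.subset_span (by simp))
    exact hxli.notMem_span_image (by simp [hut]) hmemspan
  -- two pairs cannot share a vertex
  have hgeo : ∀ u t, ∀ i j k : Fin n, j ≠ i → k ≠ i → k ≠ j → c t i ≠ 0 → c t j ≠ 0 →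
      c u i ≠ 0 → c u k ≠ 0 → False := by
    intro u t i j k hji hki hkj hti htj hui huk
    obtain ⟨hbi, hbj, hq1⟩ := hP3 t i j (fun h => hji h.symm) hti htj
    obtain ⟨_, hbk, hq2⟩ := hP3 u i k (fun h => hki h.symm) hui huk
    set e1 : ℝ := (c t i : ℝ) * (c t j : ℝ) with he1
    set e2 : ℝ := (c u i : ℝ) * (c u k : ℝ) with he2
    have he1abs : |e1| = 1 := by
      rw [he1, abs_mul]
      rcases hpm t i hti with h | h <;> rcases hpm t j htj with h' | h' <;> simp [h, h']
    have he2abs : |e2| = 1 := by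
      rw [he2, abs_mul]
      rcases hpm u i hui with h | h <;> rcases hpm u k huk with h' | h' <;> simp [h, h']
    set u0 : Evec n := (-e1) • b j + (-e2) • b k with hu0
    have hmem : u0 ∈ Submodule.span ℝ (b '' {l | l ≠ i}) := by
      rw [hu0]
      exact Submodule.add_mem _
        (Submodule.smul_mem _ _ (Submodule.subset_span ⟨j, hji, rfl⟩))
        (Submodule.smul_mem _ _ (Submodule.subset_span ⟨k, hki, rfl⟩))
    have hinnval : ⟪b i, u0⟫ = m ^ 2 := by
      rw [hu0, inner_add_right, real_inner_smul_right, real_inner_smul_right]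
      have he12 : e1 * ⟪b i, b j⟫ = -(m ^ 2) / 2 := hq1
      have he22 : e2 * ⟪b i, b k⟫ = -(m ^ 2) / 2 := hq2
      linarith [he12, he22]
    have hbjk : |⟪b j, b k⟫| ≤ m ^ 2 / 2 := by
      have := hpair j k hkj
      rw [hbj, hbk] at this
      linarith
    have hcross : |e1 * e2 * ⟪b j, b k⟫| ≤ m ^ 2 / 2 := by
      rw [abs_mul, abs_mul, he1abs, he2abs, one_mul, one_mul]
      exact hbjk
    have hnormu0 : ‖u0‖ ^ 2 ≤ 3 * m ^ 2 := by
      have hthis := norm_add_sq_real ((-e1) • b j) ((-e2) • b k)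
      rw [norm_smul, norm_smul, real_inner_smul_left, real_inner_smul_right, mul_pow,
        mul_pow] at hthis
      simp only [Real.norm_eq_abs, sq_abs] at hthis
      rw [hbj, hbk] at hthis
      have he1sq : e1 ^ 2 = 1 := by
        have := he1abs
        nlinarith [sq_abs e1]
      have he2sq : e2 ^ 2 = 1 := by
        have := he2abs
        nlinarith [sq_abs e2]
      have habs3 := abs_le.1 hcross
      rw [← hu0] at hthis
      nlinarith [hthis, he1sq, he2sq, hmpos]
    have hfin := hinner i u0 hmem
    rw [hinnval, hbi] at hfin
    have hfin2 : m ^ 2 ≤ m / 2 * ‖u0‖ := le_trans (le_abs_self _) hfin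
    nlinarith [norm_nonneg u0, hmpos, mul_le_mul hfin2 hfin2 (sq_nonneg m) (by positivity),
      mul_le_mul_of_nonneg_left hnormu0 (by positivity : (0:ℝ) ≤ m ^ 2 / 4),
      mul_pos (mul_pos hmpos hmpos) (mul_pos hmpos hmpos)]
  -- setup for coordinate functionals
  haveI : Nonempty (Fin n) := ⟨⟨0, hn⟩⟩
  have hcard : Fintype.card (Fin n) = Module.finrank ℝ (Evec n) := by
    simp [finrank_euclideanSpace_fin]
  set Bb : Module.Basis (Fin n) ℝ (Evec n) := basisOfLinearIndependentOfCardEqFinrank hb hcard with hBb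
  have hBb_eq : ⇑Bb = b := coe_basisOfLinearIndependentOfCardEqFinrank _ _
  set Bx : Module.Basis (Fin n) ℝ (Evec n) := basisOfLinearIndependentOfCardEqFinrank hxli hcard with hBx
  have hBx_eq : ⇑Bx = x := coe_basisOfLinearIndependentOfCardEqFinrank _ _
  have hxtop : Submodule.span ℝ (Set.range x) = ⊤ := by rw [← hBx_eq]; exact Bx.span_eq
  have hcoord_b : ∀ i k : Fin n, Bb.coord i (b k) = if k = i then 1 else 0 := by
    intro i k
    have hbk : b k = Bb k := by rw [hBb_eq]
    rw [hbk, Module.Basis.coord_apply, Module.Basis.repr_self]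
    exact Finsupp.single_apply
  have hcoord_x : ∀ (i : Fin n) t, Bb.coord i (x t) = (c t i : ℝ) := by
    intro i t
    rw [hc t, _root_.map_sum, Finset.sum_eq_single i]
    · rw [_root_.map_smul, hcoord_b i i]; simp
    · intro k _ hk
      rw [_root_.map_smul, hcoord_b i k]
      simp [hk]
    · intro h; exact absurd (Finset.mem_univ i) h
  have hcoord_span : ∀ (i : Fin n) (S : Set (Fin n)), i ∉ S →
      ∀ w ∈ Submodule.span ℝ (b '' S), Bb.coord i w = 0 := by
    intro i S hiS w hw
    have hle : Submodule.span ℝ (b '' S) ≤ LinearMap.ker (Bb.coord i) := by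
      rw [Submodule.span_le]
      rintro v ⟨k, hk, rfl⟩
      rw [SetLike.mem_coe, LinearMap.mem_ker, hcoord_b i k]
      have hki : k ≠ i := fun h => hiS (h ▸ hk)
      simp [hki]
    exact LinearMap.mem_ker.1 (hle hw)
  -- every column is covered
  have hcov : ∀ i, ∃ t, c t i ≠ 0 := by
    intro i
    by_contra hall
    push_neg at hall
    have hxin : ∀ t, x t ∈ Submodule.span ℝ (b '' {k | k ≠ i}) := by
      intro t
      rw [hc t]
      refine Submodule.sum_mem _ fun j _ => ?_
      by_cases hji : j = i
      · rw [hji, hall t]; simp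
      · exact Submodule.smul_mem _ _ (Submodule.subset_span ⟨j, hji, rfl⟩)
    have hbi : b i ∈ Submodule.span ℝ (b '' {k | k ≠ i}) := by
      have hle : Submodule.span ℝ (Set.range x) ≤ Submodule.span ℝ (b '' {k | k ≠ i}) :=
        Submodule.span_le.2 (by rintro v ⟨t, rfl⟩; exact hxin t)
      rw [hxtop] at hle
      exact hle Submodule.mem_top
    have h0 : Bb.coord i (b i) = 0 := hcoord_span i {k | k ≠ i} (by simp) (b i) hbi
    rw [hcoord_b i i] at h0
    simp at h0
  -- singleton rows give basis vectors
  have hsingleton_mem : ∀ u (i : Fin n), c u i ≠ 0 → (∀ k, k ≠ i → c u k = 0) →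
      b i ∈ Submodule.span ℤ (Set.range x) := by
    intro u i hui hk0
    have hxu : x u = (c u i : ℝ) • b i := by
      rw [hc u]
      exact Finset.sum_eq_single i (fun k _ hk => by rw [hk0 k hk]; simp)
        (fun h => absurd (Finset.mem_univ i) h)
    have hcc : c u i * c u i = 1 := by rcases hpm u i hui with h | h <;> rw [h] <;> norm_num
    have hbi : b i = c u i • x u := by
      rw [hxu, Int.cast_smul_eq_zsmul ℝ, smul_smul, hcc, one_smul]
    rw [hbi]
    exact Submodule.smul_mem _ _ (Submodule.subset_span ⟨u, rfl⟩)
  -- main claim : every basis vector is in the ℤ-span of the x's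
  have hbx : ∀ i, b i ∈ Submodule.span ℤ (Set.range x) := by
    intro i
    obtain ⟨t, hti⟩ := hcov i
    by_cases hpairex : ∃ j, j ≠ i ∧ c t j ≠ 0
    · obtain ⟨j, hji, htj⟩ := hpairex
      have hij : i ≠ j := fun h => hji h.symm
      -- find a singleton row at i or at j
      have hsingle : ∃ u, (c u i ≠ 0 ∧ ∀ k, k ≠ i → c u k = 0) ∨
          (c u j ≠ 0 ∧ ∀ k, k ≠ j → c u k = 0) := by
        by_contra hno
        have hno' : ∀ u, ¬(c u i ≠ 0 ∧ ∀ k, k ≠ i → c u k = 0) ∧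
            ¬(c u j ≠ 0 ∧ ∀ k, k ≠ j → c u k = 0) := fun u => not_or.1 (not_exists.1 hno u)
        have hz : ∀ u, u ≠ t → c u i = 0 ∧ c u j = 0 := by
          intro u hut
          constructor
          · by_contra hui
            have hex : ∃ k, k ≠ i ∧ c u k ≠ 0 := by
              by_contra hk
              push_neg at hk
              exact (hno' u).1 ⟨hui, hk⟩
            obtain ⟨k, hki, huk⟩ := hex
            by_cases hkj : k = j
            · subst hkj
              exact hsame u t i k hut hij hti htj hui huk
            · exact hgeo u t i j k hji hki hkj hti htj hui huk
          · by_contra huj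
            have hex : ∃ k, k ≠ j ∧ c u k ≠ 0 := by
              by_contra hk
              push_neg at hk
              exact (hno' u).2 ⟨huj, hk⟩
            obtain ⟨k, hki, huk⟩ := hex
            by_cases hkj : k = i
            · subst hkj
              exact hsame u t k j hut hij hti htj huk huj
            · exact hgeo u t j i k hij hki hkj htj hti huj huk
        have hWmem : ∀ u, x u ∈ Submodule.span ℝ
            (insert (x t) (b '' {k | k ≠ i ∧ k ≠ j})) := by
          intro u
          by_cases hut : u = t
          · subst hut; exact Submodule.subset_span (Set.mem_insert _ _)
          · rw [hc u]
            refine Submodule.sum_mem _ fun l _ => ?_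
            by_cases hli : l = i
            · rw [hli, (hz u hut).1]; simp
            · by_cases hlj : l = j
              · rw [hlj, (hz u hut).2]; simp
              · exact Submodule.smul_mem _ _
                  (Submodule.subset_span (Set.mem_insert_of_mem _ ⟨l, ⟨hli, hlj⟩, rfl⟩))
        have hbiW : b i ∈ Submodule.span ℝ (insert (x t) (b '' {k | k ≠ i ∧ k ≠ j})) := by
          have hle : Submodule.span ℝ (Set.range x) ≤
              Submodule.span ℝ (insert (x t) (b '' {k | k ≠ i ∧ k ≠ j})) :=
            Submodule.span_le.2 (by rintro v ⟨u, rfl⟩; exact hWmem u)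
          rw [hxtop] at hle
          exact hle Submodule.mem_top
        obtain ⟨α, z, hz2, hbieq⟩ := Submodule.mem_span_insert.1 hbiW
        have hzi : Bb.coord i z = 0 := hcoord_span i {k | k ≠ i ∧ k ≠ j}
          (by simp) z hz2
        have hzj : Bb.coord j z = 0 := hcoord_span j {k | k ≠ i ∧ k ≠ j}
          (by simp) z hz2
        have e1 : (1 : ℝ) = α * (c t i : ℝ) := by
          have hcg := congrArg (Bb.coord i) hbieq
          rw [map_add, _root_.map_smul, hcoord_x i t, hzi, hcoord_b i i] at hcg
          simpa using hcg
        have e2 : (0 : ℝ) = α * (c t j : ℝ) := by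
          have hcg := congrArg (Bb.coord j) hbieq
          rw [map_add, _root_.map_smul, hcoord_x j t, hzj, hcoord_b j i] at hcg
          simpa [hij] using hcg
        have hctj : (c t j : ℝ) ≠ 0 := Int.cast_ne_zero.2 htj
        have hα0 : α = 0 := by
          rcases mul_eq_zero.1 e2.symm with h | h
          · exact h
          · exact absurd h hctj
        rw [hα0] at e1
        simp at e1
      obtain ⟨u, hu⟩ := hsingle
      rcases hu with ⟨hui, hk0⟩ | ⟨huj, hk0⟩
      · exact hsingleton_mem u i hui hk0
      · have hbj : b j ∈ Submodule.span ℤ (Set.range x) := hsingleton_mem u j huj hk0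
        have hxt2 : x t = (c t i : ℝ) • b i + (c t j : ℝ) • b j := hcollapse t i j hij hti htj
        have hcc : c t i * c t i = 1 := by rcases hpm t i hti with h | h <;> rw [h] <;> norm_num
        have hkey : (c t i : ℝ) • x t - ((c t i * c t j : ℤ) : ℝ) • b j = b i := by
          rw [hxt2]
          have h1 : (c t i : ℝ) * (c t i : ℝ) = 1 := by exact_mod_cast hcc
          push_cast
          match_scalars
          · linear_combination h1
          · ring
        have hbi : b i = c t i • x t - (c t i * c t j) • b j := by
          rw [← hkey, Int.cast_smul_eq_zsmul ℝ, Int.cast_smul_eq_zsmul ℝ]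
        rw [hbi]
        exact Submodule.sub_mem _
          (Submodule.smul_mem _ _ (Submodule.subset_span ⟨t, rfl⟩))
          (Submodule.smul_mem _ _ hbj)
    · push_neg at hpairex
      exact hsingleton_mem t i hti fun k hk => hpairex k hk
  -- conclusion
  have hxb : ∀ t, x t ∈ Submodule.span ℤ (Set.range b) := by
    intro t
    rw [hc t]
    refine Submodule.sum_mem _ fun i _ => ?_
    rw [Int.cast_smul_eq_zsmul ℝ]
    exact Submodule.smul_mem _ _ (Submodule.subset_span ⟨i, rfl⟩)
  have hspan_eq : Submodule.span ℤ (Set.range x) = Submodule.span ℤ (Set.range b) :=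
    le_antisymm (Submodule.span_le.2 (by rintro v ⟨t, rfl⟩; exact hxb t))
      (Submodule.span_le.2 (by rintro v ⟨i, rfl⟩; exact hbx i))
  rw [latticeOf_eq_span, latticeOf_eq_span, hspan_eq]
end

section
/- Let n ≥ 2 and let L be a well-rounded lattice in ℝⁿ possessing a nearly orthogonal basis. Then C(L) = 1/2 if and only if |S(L)| > 2n. -/
open scoped RealInnerProductSpace
open Submodule Metric MeasureTheory

namespace Stmt16Aux

variable {n : ℕ}

lemma basis_mem_lat (b : Fin n → Evec n) (i : Fin n) : b i ∈ latticeOf b := by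
  refine ⟨fun j => if j = i then 1 else 0, ?_⟩
  simp

lemma lat_add {b : Fin n → Evec n} {x y : Evec n} (hx : x ∈ latticeOf b)
    (hy : y ∈ latticeOf b) : x + y ∈ latticeOf b := by
  obtain ⟨c, rfl⟩ := hx; obtain ⟨d, rfl⟩ := hy
  refine ⟨c + d, ?_⟩
  rw [← Finset.sum_add_distrib]
  refine Finset.sum_congr rfl fun j _ => ?_
  simp only [Pi.add_apply]
  push_cast
  rw [add_smul]

lemma lat_neg {b : Fin n → Evec n} {x : Evec n} (hx : x ∈ latticeOf b) :
    -x ∈ latticeOf b := by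
  obtain ⟨c, rfl⟩ := hx
  refine ⟨-c, ?_⟩
  rw [← Finset.sum_neg_distrib]
  refine Finset.sum_congr rfl fun j _ => ?_
  simp only [Pi.neg_apply]
  push_cast
  rw [neg_smul]

lemma lat_sub {b : Fin n → Evec n} {x y : Evec n} (hx : x ∈ latticeOf b)
    (hy : y ∈ latticeOf b) : x - y ∈ latticeOf b := by
  rw [sub_eq_add_neg]; exact lat_add hx (lat_neg hy)

lemma erase_mem_lat {b : Fin n → Evec n} (c : Fin n → ℤ) (i : Fin n) :
    (∑ j ∈ Finset.univ.erase i, (c j : ℝ) • b j : Evec n) ∈ latticeOf b := by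
  refine ⟨fun j => if j = i then 0 else c j, ?_⟩
  rw [← Finset.sum_erase_add _ _ (Finset.mem_univ i)]
  simp only [if_true, Int.cast_zero, zero_smul, add_zero]
  refine Finset.sum_congr rfl fun j hj => ?_
  rw [if_neg (Finset.mem_erase.mp hj).1]

lemma combo_zero {b : Fin n → Evec n} (hb : LinearIndependent ℝ b) (g : Fin n → ℝ)
    (h : ∑ l, g l • b l = 0) : ∀ l, g l = 0 :=
  Fintype.linearIndependent_iff.mp hb g h

lemma pyth {a c : Evec n} (h : ⟪a, c⟫ = 0) : ‖a + c‖ ^ 2 = ‖a‖ ^ 2 + ‖c‖ ^ 2 := by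
  rw [norm_add_sq_real, h]; ring

end Stmt16Aux

namespace Stmt16Aux2
open Stmt16Aux

variable {n : ℕ}

lemma pyth_proj (V : Submodule ℝ (Evec n)) (v : Evec n) :
    ‖v‖ ^ 2 = ‖(orthogonalProjection V v : Evec n)‖ ^ 2 + ‖v - orthogonalProjection V v‖ ^ 2 := by
  have h0 : ⟪(orthogonalProjection V v : Evec n), v - orthogonalProjection V v⟫ = 0 :=
    Submodule.inner_right_of_mem_orthogonal (SetLike.coe_mem _)
      (Submodule.sub_starProjection_mem_orthogonal (K := V) v)
  have h := pyth h0
  simp only [add_sub_cancel] at h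
  linarith

lemma proj_le_half_of_angle {v : Evec n} (V : Submodule ℝ (Evec n)) (hv : v ≠ 0)
    (h : Real.pi / 3 ≤ subAngle v V) :
    ‖(orthogonalProjection V v : Evec n)‖ ≤ ‖v‖ / 2 := by
  set p : Evec n := (orthogonalProjection V v : Evec n) with hp
  have hvpos : 0 < ‖v‖ := norm_pos_iff.mpr hv
  have hple : ‖p‖ ≤ ‖v‖ := by
    have := pyth_proj V v
    nlinarith [norm_nonneg p, norm_nonneg (v - p), norm_nonneg v]
  have hr1 : ‖p‖ / ‖v‖ ≤ 1 := by
    rw [div_le_one hvpos]; exact hple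
  have hr0 : -1 ≤ ‖p‖ / ‖v‖ := by
    have : (0:ℝ) ≤ ‖p‖ / ‖v‖ := by positivity
    linarith
  have hcos : Real.cos (subAngle v V) = ‖p‖ / ‖v‖ := Real.cos_arccos hr0 hr1
  have hle : Real.cos (subAngle v V) ≤ Real.cos (Real.pi / 3) := by
    apply Real.cos_le_cos_of_nonneg_of_le_pi (by positivity) ?_ h
    exact Real.arccos_le_pi _
  rw [hcos, Real.cos_pi_div_three] at hle
  rw [div_le_div_iff₀ hvpos (by norm_num : (0:ℝ) < 2)] at hle
  linarith [hle]

lemma proj_bound (hn : 2 ≤ n) {b : Fin n → Evec n} (hb : LinearIndependent ℝ b)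
    (hNO : NearlyOrth b) (i : Fin n) :
    ‖(orthogonalProjection (Submodule.span ℝ (b '' {j | j ≠ i})) (b i) : Evec n)‖ ≤ ‖b i‖ / 2 := by
  have h0n : 0 < n := by omega
  set last : Fin n := ⟨n - 1, by omega⟩ with hlastdef
  have hlast : 0 < (last : ℕ) := by simp only [hlastdef]; omega
  have key := hNO (Equiv.swap i last) last hlast
  have h1 : (b ∘ (Equiv.swap i last)) last = b i := by
    simp [Equiv.swap_apply_right]
  have hsetlt : {j : Fin n | j < last} = ({last} : Set (Fin n))ᶜ := by
    ext j
    simp only [Set.mem_setOf_eq, Set.mem_compl_iff, Set.mem_singleton_iff]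
    constructor
    · intro hj hj'; rw [hj'] at hj; exact lt_irrefl _ hj
    · intro hj
      have := j.isLt
      rw [Fin.lt_def]
      rcases lt_or_eq_of_le (Nat.le_of_lt_succ (by omega : (j:ℕ) < (n-1)+1)) with h | h
      · simpa [hlastdef] using h
      · exfalso; exact hj (Fin.ext (by simpa [hlastdef] using h))
  have hset : ((b ∘ (Equiv.swap i last)) '' {j | j < last}) = b '' {j | j ≠ i} := by
    rw [hsetlt, Set.image_comp]
    have h2 : (⇑(Equiv.swap i last)) '' (({last} : Set (Fin n))ᶜ) = ({i} : Set (Fin n))ᶜ := by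
      rw [Set.image_compl_eq (Equiv.swap i last).bijective]
      congr 1
      simp [Equiv.swap_apply_right]
    rw [h2]
    rfl
  rw [h1, hset] at key
  exact proj_le_half_of_angle _ (hb.ne_zero i) key

end Stmt16Aux2

namespace Stmt16Aux3
open Stmt16Aux Stmt16Aux2

variable {n : ℕ}

lemma core_arith0 {m t β : ℝ} (hm0 : 0 < m) (ht1 : 1 ≤ t) (hbm : m ≤ β)
    (heq : m = t * β) : t = 1 ∧ β = m := by
  have hβ0 : 0 < β := lt_of_lt_of_le hm0 hbm
  have htle : t ≤ 1 := by nlinarith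
  have ht : t = 1 := le_antisymm htle ht1
  refine ⟨ht, ?_⟩
  rw [ht, one_mul] at heq; exact heq.symm

set_option maxHeartbeats 2000000 in
lemma core_arith {m E t β P Q Y : ℝ} (hm0 : 0 < m) (ht1 : 1 ≤ t) (hbm : m ≤ β)
    (hP : P ≤ β / 2) (hP0 : 0 ≤ P) (hQ0 : 0 ≤ Q) (hE0 : 0 ≤ E) (hY : m ≤ Y)
    (hPy1 : β ^ 2 = P ^ 2 + Q ^ 2) (hPy2 : m ^ 2 = E ^ 2 + (t * Q) ^ 2)
    (htri : Y ≤ E + t * P) : t = 1 ∧ β = m ∧ Y = m := by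
  have hβ0 : 0 < β := lt_of_lt_of_le hm0 hbm
  have ht0 : (0:ℝ) ≤ t := by linarith
  have hq2 : 3 / 4 * β ^ 2 ≤ Q ^ 2 := by nlinarith
  have h5 : E ^ 2 + 3 / 4 * (t * β) ^ 2 ≤ m ^ 2 := by
    nlinarith [mul_le_mul_of_nonneg_left hq2 (sq_nonneg t)]
  have hslt : t * β < 2 * m := by nlinarith [mul_nonneg ht0 hβ0.le]
  have hElow : m - t * β / 2 ≤ E := by
    nlinarith [mul_le_mul_of_nonneg_left hP ht0]
  have hpos : 0 ≤ m - t * β / 2 := by linarith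
  have h6 : (m - t * β / 2) ^ 2 ≤ E ^ 2 := by nlinarith
  have spos : 0 < t * β := mul_pos (lt_of_lt_of_le one_pos ht1) hβ0
  have hs2 : (t * β) ^ 2 ≤ m * (t * β) := by nlinarith [h5, h6]
  have hsle : t * β ≤ m := by nlinarith [hs2, spos]
  have hsge : m ≤ t * β := by
    nlinarith [mul_le_mul_of_nonneg_right ht1 hβ0.le]
  have hs : t * β = m := le_antisymm hsle hsge
  obtain ⟨ht, hβ⟩ := core_arith0 hm0 ht1 hbm hs.symm
  refine ⟨ht, hβ, ?_⟩
  have hEle : E ≤ m / 2 := by nlinarith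
  have hyle : Y ≤ m := by
    have : t * P ≤ m / 2 := by rw [ht, one_mul]; rw [hβ] at hP; linarith
    linarith
  exact le_antisymm hyle hY

lemma core {b : Fin n → Evec n} (hb : LinearIndependent ℝ b)
    (hproj : ∀ i : Fin n, ‖(orthogonalProjection (Submodule.span ℝ (b '' {j | j ≠ i})) (b i) : Evec n)‖ ≤ ‖b i‖ / 2)
    {m : ℝ} (hm0 : 0 < m) (hmin : ∀ z ∈ latticeOf b, z ≠ 0 → m ≤ ‖z‖)
    (c : Fin n → ℤ) (hxm : ‖(∑ j, (c j : ℝ) • b j : Evec n)‖ = m) (i : Fin n) (hci : c i ≠ 0) :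
    (c i = 1 ∨ c i = -1) ∧ ‖b i‖ = m ∧
      ((∑ j ∈ Finset.univ.erase i, (c j : ℝ) • b j : Evec n) = 0 ∨
        ‖(∑ j ∈ Finset.univ.erase i, (c j : ℝ) • b j : Evec n)‖ = m) := by
  classical
  set x : Evec n := ∑ j, (c j : ℝ) • b j with hxdef
  set y : Evec n := ∑ j ∈ Finset.univ.erase i, (c j : ℝ) • b j with hydef
  have hxy : y + (c i : ℝ) • b i = x := Finset.sum_erase_add _ _ (Finset.mem_univ i)
  set V := Submodule.span ℝ (b '' {j | j ≠ i}) with hV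
  set p : Evec n := (orthogonalProjection V (b i) : Evec n) with hpdef
  set q : Evec n := b i - p with hqdef
  have hpV : p ∈ V := SetLike.coe_mem _
  have hqO : q ∈ Vᗮ := Submodule.sub_starProjection_mem_orthogonal (K := V) (b i)
  have hyV : y ∈ V := by
    refine Submodule.sum_mem _ fun j hj => Submodule.smul_mem _ _ ?_
    exact Submodule.subset_span ⟨j, (Finset.mem_erase.mp hj).1, rfl⟩
  have hbi : b i = p + q := by rw [hqdef]; abel
  have hPy1 : ‖b i‖ ^ 2 = ‖p‖ ^ 2 + ‖q‖ ^ 2 := by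
    have h0 : ⟪p, q⟫ = 0 := Submodule.inner_right_of_mem_orthogonal hpV hqO
    rw [hbi]; exact pyth h0
  have hxdec : x = (y + (c i : ℝ) • p) + (c i : ℝ) • q := by
    rw [← hxy, hbi, smul_add]; abel
  have hPy2 : m ^ 2 = ‖y + (c i : ℝ) • p‖ ^ 2 + (|(c i : ℝ)| * ‖q‖) ^ 2 := by
    have hAV : y + (c i : ℝ) • p ∈ V := add_mem hyV (Submodule.smul_mem _ _ hpV)
    have hBO : (c i : ℝ) • q ∈ Vᗮ := Submodule.smul_mem _ _ hqO
    have h0 : ⟪y + (c i : ℝ) • p, (c i : ℝ) • q⟫ = 0 :=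
      Submodule.inner_right_of_mem_orthogonal hAV hBO
    rw [← hxm, hxdec, pyth h0, norm_smul, Real.norm_eq_abs]
  have ht1 : 1 ≤ |(c i : ℝ)| := by
    have h : (1 : ℤ) ≤ |c i| := Int.one_le_abs hci
    calc (1:ℝ) = ((1:ℤ):ℝ) := by norm_num
    _ ≤ ((|c i| : ℤ) : ℝ) := by exact_mod_cast h
    _ = |(c i : ℝ)| := by push_cast; ring
  have hbim : m ≤ ‖b i‖ := hmin _ (basis_mem_lat b i) (hb.ne_zero i)
  have hp2 : ‖p‖ ≤ ‖b i‖ / 2 := hproj i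
  have abs_one : |(c i : ℝ)| = 1 → (c i = 1 ∨ c i = -1) := by
    intro h
    have h' : |c i| = (1 : ℤ) := by exact_mod_cast (by push_cast; linarith [h] : ((|c i|:ℤ):ℝ) = 1)
    rcases (abs_eq (by norm_num : (0:ℤ) ≤ 1)).mp h' with h'' | h''
    · exact Or.inl h''
    · exact Or.inr h''
  by_cases hy0 : y = 0
  · have hxei : x = (c i : ℝ) • b i := by rw [← hxy, hy0, zero_add]
    have hm_eq : m = |(c i : ℝ)| * ‖b i‖ := by
      rw [← hxm, hxei, norm_smul, Real.norm_eq_abs]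
    obtain ⟨ht, hβ⟩ := core_arith0 hm0 ht1 hbim hm_eq
    exact ⟨abs_one ht, hβ, Or.inl hy0⟩
  · have hyL : y ∈ latticeOf b := erase_mem_lat c i
    have hym : m ≤ ‖y‖ := hmin y hyL hy0
    have htri : ‖y‖ ≤ ‖y + (c i : ℝ) • p‖ + |(c i : ℝ)| * ‖p‖ := by
      have hy' : y = (y + (c i : ℝ) • p) - (c i : ℝ) • p := by abel
      calc ‖y‖ = ‖(y + (c i : ℝ) • p) - (c i : ℝ) • p‖ := by rw [← hy']
      _ ≤ ‖y + (c i : ℝ) • p‖ + ‖(c i : ℝ) • p‖ := norm_sub_le _ _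
      _ = ‖y + (c i : ℝ) • p‖ + |(c i : ℝ)| * ‖p‖ := by rw [norm_smul, Real.norm_eq_abs]
    obtain ⟨ht, hβ, hY⟩ := core_arith hm0 ht1 hbim hp2 (norm_nonneg p) (norm_nonneg q)
      (norm_nonneg _) hym hPy1 hPy2 htri
    exact ⟨abs_one ht, hβ, Or.inr hY⟩

end Stmt16Aux3

namespace Stmt16Aux4
open Stmt16Aux Stmt16Aux2 Stmt16Aux3

variable {n : ℕ}

lemma two_combo {b : Fin n → Evec n} (hb : LinearIndependent ℝ b) (i j : Fin n) :
    b i + b j ≠ 0 := by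
  intro h
  have hsum : ∑ l, ((if l = i then (1:ℝ) else 0) + (if l = j then 1 else 0)) • b l = 0 := by
    simp only [add_smul, ite_smul, one_smul, zero_smul, Finset.sum_add_distrib,
      Finset.sum_ite_eq', Finset.mem_univ, if_true]
    exact h
  have hz := combo_zero hb _ hsum i
  simp only [if_pos rfl] at hz
  split_ifs at hz <;> linarith

lemma triple_combo {b : Fin n → Evec n} (hb : LinearIndependent ℝ b) {i j k : Fin n}
    (hij : i ≠ j) {e1 e2 e3 : ℝ} (he1 : e1 ≠ 0) (he2 : e2 ≠ 0) (he3 : e3 ≠ 0)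
    (h : e3 • b k = e1 • b i + e2 • b j) : False := by
  have hsum : ∑ l, ((if l = i then e1 else 0) + (if l = j then e2 else 0)
      + (if l = k then -e3 else 0)) • b l = 0 := by
    simp only [add_smul, ite_smul, zero_smul, Finset.sum_add_distrib,
      Finset.sum_ite_eq', Finset.mem_univ, if_true, neg_smul]
    rw [h]; abel
  have hz := combo_zero hb _ hsum
  by_cases hk : k = i
  · have := hz j
    rw [if_neg (Ne.symm hij), if_pos rfl, if_neg (by rw [hk]; exact Ne.symm hij)] at this
    simp at this; exact he2 this
  · by_cases hk' : k = j
    · have := hz i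
      rw [if_pos rfl, if_neg hij, if_neg (by rw [hk']; exact hij)] at this
      simp at this; exact he1 this
    · have := hz k
      rw [if_neg hk, if_neg hk', if_pos rfl] at this
      simp at this; exact he3 this

end Stmt16Aux4

namespace Stmt16Aux5
open Stmt16Aux Stmt16Aux2 Stmt16Aux3 Stmt16Aux4

set_option maxHeartbeats 1000000 in
theorem stmt_16' {n : ℕ} (hn : 2 ≤ n) (b : Fin n → Evec n)
    (hb : LinearIndependent ℝ b) (hNO : NearlyOrth b)
    (hWR : Submodule.span ℝ (minVecs (latticeOf b)) = ⊤) :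
    sSup {t | ∃ x ∈ minVecs (latticeOf b), ∃ y ∈ minVecs (latticeOf b), x ≠ y ∧ x ≠ -y ∧
      t = |⟪x, y⟫| / (‖x‖ * ‖y‖)} = 1 / 2 ↔ 2 * n < (minVecs (latticeOf b)).ncard := by
  classical
  obtain ⟨S, hS⟩ : ∃ S, S = minVecs (latticeOf b) := ⟨_, rfl⟩
  rw [← hS]
  obtain ⟨Tset, hT⟩ : ∃ T, T = {t | ∃ x ∈ S, ∃ y ∈ S, x ≠ y ∧ x ≠ -y ∧
      t = |⟪x, y⟫| / (‖x‖ * ‖y‖)} := ⟨_, rfl⟩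
  rw [← hT]
  have hi0 : (⟨0, by omega⟩ : Fin n) ≠ (⟨1, by omega⟩ : Fin n) := by
    intro h; exact absurd (Fin.mk.injEq _ _ _ _ ▸ h) (by simp)
  have memS_elim : ∀ x ∈ S, x ∈ latticeOf b ∧ x ≠ 0 ∧
      ∀ y ∈ latticeOf b, y ≠ 0 → ‖x‖ ≤ ‖y‖ := by
    rw [hS]; exact fun x hx => hx
  have hSne : S.Nonempty := by
    by_contra h
    rw [Set.not_nonempty_iff_eq_empty] at h
    rw [← hS, h, Submodule.span_empty] at hWR
    have h2 : b ⟨0, by omega⟩ ∈ (⊥ : Submodule ℝ (Evec n)) := hWR ▸ Submodule.mem_top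
    exact hb.ne_zero _ (Submodule.mem_bot ℝ |>.mp h2)
  obtain ⟨x₀, hx₀⟩ := hSne
  obtain ⟨hx₀L, hx₀0, hx₀min⟩ := memS_elim x₀ hx₀
  obtain ⟨m, hmdef⟩ : ∃ r : ℝ, r = ‖x₀‖ := ⟨_, rfl⟩
  have hm0 : 0 < m := hmdef ▸ norm_pos_iff.mpr hx₀0
  have hmin : ∀ z ∈ latticeOf b, z ≠ 0 → m ≤ ‖z‖ := hmdef ▸ hx₀min
  have hnormS : ∀ x ∈ S, ‖x‖ = m := fun x hx =>
    le_antisymm (hmdef ▸ (memS_elim x hx).2.2 x₀ hx₀L hx₀0)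
      (hmin x (memS_elim x hx).1 (memS_elim x hx).2.1)
  have hproj : ∀ i : Fin n,
      ‖(orthogonalProjection (Submodule.span ℝ (b '' {j | j ≠ i})) (b i) : Evec n)‖ ≤ ‖b i‖ / 2 :=
    fun i => proj_bound hn hb hNO i
  have memS_intro : ∀ x : Evec n, x ∈ latticeOf b → x ≠ 0 → ‖x‖ = m → x ∈ S := by
    rw [hS]
    exact fun x h1 h2 h3 => ⟨h1, h2, fun y hy hy0 => h3 ▸ hmin y hy hy0⟩
  -- every index is hit by a minimal vector
  have hcoord : ∀ i : Fin n, ∃ x ∈ S, ∃ c : Fin n → ℤ, x = ∑ j, (c j : ℝ) • b j ∧ c i ≠ 0 := by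
    intro i
    by_contra h
    push_neg at h
    have hsub : S ⊆ (Submodule.span ℝ (b '' {j | j ≠ i}) : Set (Evec n)) := by
      intro x hx
      obtain ⟨c, hc⟩ := (memS_elim x hx).1
      have hci : c i = 0 := h x hx c hc
      rw [hc, ← Finset.sum_erase_add _ _ (Finset.mem_univ i), hci]
      simp only [Int.cast_zero, zero_smul, add_zero]
      exact Submodule.sum_mem _ fun j hj => Submodule.smul_mem _ _
        (Submodule.subset_span ⟨j, (Finset.mem_erase.mp hj).1, rfl⟩)
    have htop : (⊤ : Submodule ℝ (Evec n)) ≤ Submodule.span ℝ (b '' {j | j ≠ i}) := by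
      rw [← hWR]
      exact Submodule.span_le.mpr (hS ▸ hsub)
    have hbi : b i ∈ Submodule.span ℝ (b '' {j | j ≠ i}) := htop Submodule.mem_top
    exact hb.notMem_span_image (by simp : i ∉ {j | j ≠ i}) hbi
  -- basis vectors are minimal
  have hbS : ∀ i : Fin n, ‖b i‖ = m ∧ b i ∈ S := by
    intro i
    obtain ⟨x, hxS, c, hxc, hci⟩ := hcoord i
    have hxm : ‖(∑ j, (c j : ℝ) • b j : Evec n)‖ = m := by rw [← hxc]; exact hnormS x hxS
    obtain ⟨_, hβ, _⟩ := core hb hproj hm0 hmin c hxm i hci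
    exact ⟨hβ, memS_intro _ (basis_mem_lat b i) (hb.ne_zero i) hβ⟩
  have hnegS : ∀ x ∈ S, -x ∈ S := fun x hx =>
    memS_intro _ (lat_neg (memS_elim x hx).1) (neg_ne_zero.mpr (memS_elim x hx).2.1)
      (by rw [norm_neg]; exact hnormS x hx)
  -- the "double basis" set
  obtain ⟨Sb, hSbdef⟩ : ∃ Sb : Set (Evec n),
      Sb = Set.range b ∪ Set.range (fun i => -(b i)) := ⟨_, rfl⟩
  have memSb : ∀ w, w ∈ Sb ↔ ((∃ i, b i = w) ∨ (∃ i, -(b i) = w)) := by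
    rw [hSbdef]; exact fun w => Iff.rfl
  have hSbS : Sb ⊆ S := by
    intro x hx
    rcases (memSb x).mp hx with ⟨i, rfl⟩ | ⟨i, rfl⟩
    · exact (hbS i).2
    · exact hnegS _ (hbS i).2
  have hSbfin : Sb.Finite := by
    rw [hSbdef]; exact (Set.finite_range b).union (Set.finite_range _)
  have hSbcard : Sb.ncard = 2 * n := by
    have hinj2 : Function.Injective (fun i => -(b i)) :=
      fun i j h => hb.injective (neg_injective h)
    have h1 : (Set.range b).ncard = n := by
      rw [← Set.image_univ, Set.ncard_image_of_injective _ hb.injective, Set.ncard_univ]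
      simp
    have h2 : (Set.range fun i => -(b i)).ncard = n := by
      rw [← Set.image_univ, Set.ncard_image_of_injective _ hinj2, Set.ncard_univ]
      simp
    have hd : Disjoint (Set.range b) (Set.range fun i => -(b i)) := by
      rw [Set.disjoint_left]
      rintro x ⟨i, rfl⟩ ⟨j, hj⟩
      exact two_combo hb i j (by rw [← hj]; simp)
    rw [hSbdef, Set.ncard_union_eq hd (Set.finite_range b) (Set.finite_range _), h1, h2]
    omega
  have formSb : ∀ w ∈ Sb, ∃ (i : Fin n) (e : ℝ), (e = 1 ∨ e = -1) ∧ w = e • b i := by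
    intro w hw
    rcases (memSb w).mp hw with ⟨i, rfl⟩ | ⟨i, rfl⟩
    · exact ⟨i, 1, Or.inl rfl, (one_smul _ _).symm⟩
    · exact ⟨i, -1, Or.inr rfl, by simp⟩
  -- non-basic minimal vectors yield pairs at angle π/3
  have pair_half : ∀ x ∈ S, x ∉ Sb →
      ∃ u ∈ S, ∃ v ∈ S, u ≠ v ∧ u ≠ -v ∧ ⟪u, v⟫ = m ^ 2 / 2 := by
    intro x hxS hxSb
    obtain ⟨c, hc⟩ := (memS_elim x hxS).1
    have hxm : ‖(∑ j, (c j : ℝ) • b j : Evec n)‖ = m := by rw [← hc]; exact hnormS x hxS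
    have hex : ∃ i, c i ≠ 0 := by
      by_contra h; push_neg at h
      exact (memS_elim x hxS).2.1 (by rw [hc]; simp [h])
    obtain ⟨i, hci⟩ := hex
    obtain ⟨hc1, hβ, hy⟩ := core hb hproj hm0 hmin c hxm i hci
    obtain ⟨y, hydef⟩ : ∃ y : Evec n, y = ∑ j ∈ Finset.univ.erase i, (c j : ℝ) • b j :=
      ⟨_, rfl⟩
    rw [← hydef] at hy
    have hxy : y + (c i : ℝ) • b i = x := by
      rw [hc, hydef]; exact Finset.sum_erase_add _ _ (Finset.mem_univ i)
    rcases hy with hy0 | hym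
    · exfalso
      apply hxSb
      have hxei : x = (c i : ℝ) • b i := by rw [← hxy, hy0, zero_add]
      rcases hc1 with h1 | h1
      · exact (memSb x).mpr (Or.inl ⟨i, by rw [hxei, h1]; simp⟩)
      · exact (memSb x).mpr (Or.inr ⟨i, by rw [hxei, h1]; simp⟩)
    · have hy0 : y ≠ 0 := by
        intro h; rw [h, norm_zero] at hym; linarith
      have hyS : y ∈ S := memS_intro y (hydef ▸ erase_mem_lat c i) hy0 hym
      have hcine : ((c i : ℝ)) ≠ 0 := Int.cast_ne_zero.mpr hci
      have hxysub : x - y = (c i : ℝ) • b i := by rw [← hxy]; abel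
      have hnormsub : ‖x - y‖ = m := by
        rw [hxysub, norm_smul, Real.norm_eq_abs, hβ]
        rcases hc1 with h1 | h1 <;> rw [h1] <;> simp
      have hinner : ⟪x, y⟫ = m ^ 2 / 2 := by
        have he : ‖x - y‖ ^ 2 = ‖x‖ ^ 2 - 2 * ⟪x, y⟫ + ‖y‖ ^ 2 := norm_sub_sq_real x y
        rw [hnormsub, hnormS x hxS, hym] at he
        linarith
      refine ⟨x, hxS, y, hyS, ?_, ?_, hinner⟩
      · intro h
        rw [h] at hxysub
        simp only [sub_self] at hxysub
        exact hb.ne_zero i ((smul_eq_zero.mp hxysub.symm).resolve_left hcine)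
      · intro h
        have h2 : ⟪x, y⟫ = -(m ^ 2) := by
          rw [h, inner_neg_left, real_inner_self_eq_norm_sq, hym]
        rw [hinner] at h2
        nlinarith
  -- S is finite
  have hSfin : S.Finite := by
    have hsub : S ⊆ (fun c : Fin n → ℤ => (∑ j, (c j : ℝ) • b j : Evec n)) ''
        {c : Fin n → ℤ | ∀ j, c j ∈ Set.Icc (-1 : ℤ) 1} := by
      intro x hxS
      obtain ⟨c, hc⟩ := (memS_elim x hxS).1
      refine ⟨c, fun j => ?_, hc.symm⟩
      by_cases hcj : c j = 0
      · simp [hcj]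
      · obtain ⟨h1, _, _⟩ := core hb hproj hm0 hmin c
          (by rw [← hc]; exact hnormS x hxS) j hcj
        rcases h1 with h | h <;> simp [h, Set.mem_Icc]
    have hfin : ({c : Fin n → ℤ | ∀ j, c j ∈ Set.Icc (-1 : ℤ) 1}).Finite := by
      have heq : {c : Fin n → ℤ | ∀ j, c j ∈ Set.Icc (-1 : ℤ) 1} =
          Set.pi Set.univ (fun _ => Set.Icc (-1 : ℤ) 1) := by
        ext c; rw [Set.mem_setOf_eq, Set.mem_univ_pi]
      rw [heq]
      exact Set.Finite.pi fun _ => Set.finite_Icc _ _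
    exact (hfin.image _).subset hsub
  have hTfin : Tset.Finite := by
    have hsub : Tset ⊆ (fun pq : Evec n × Evec n => |⟪pq.1, pq.2⟫| / (‖pq.1‖ * ‖pq.2‖)) ''
        (S ×ˢ S) := by
      rw [hT]
      rintro t ⟨x, hx, y, hy, _, _, rfl⟩
      exact ⟨(x, y), Set.mem_prod.mpr ⟨hx, hy⟩, rfl⟩
    exact ((hSfin.prod hSfin).image _).subset hsub
  have hbound : ∀ t ∈ Tset, t ≤ 1 / 2 := by
    rw [hT]
    rintro t ⟨x, hxS, y, hyS, hxy, hxny, rfl⟩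
    have hxm := hnormS x hxS
    have hym := hnormS y hyS
    have h1 : m ≤ ‖x - y‖ := hmin _ (lat_sub (memS_elim x hxS).1 (memS_elim y hyS).1)
      (sub_ne_zero.mpr hxy)
    have h2 : m ≤ ‖x + y‖ := hmin _ (lat_add (memS_elim x hxS).1 (memS_elim y hyS).1)
      (fun h => hxny (by linear_combination (norm := module) h))
    have e1 : ‖x - y‖ ^ 2 = m ^ 2 - 2 * ⟪x, y⟫ + m ^ 2 := by
      rw [norm_sub_sq_real, hxm, hym]
    have e2 : ‖x + y‖ ^ 2 = m ^ 2 + 2 * ⟪x, y⟫ + m ^ 2 := by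
      rw [norm_add_sq_real, hxm, hym]
    have h1' : m ^ 2 ≤ ‖x - y‖ ^ 2 := by nlinarith [norm_nonneg (x - y)]
    have h2' : m ^ 2 ≤ ‖x + y‖ ^ 2 := by nlinarith [norm_nonneg (x + y)]
    have habs : |⟪x, y⟫| ≤ m ^ 2 / 2 := abs_le.mpr ⟨by linarith, by linarith⟩
    rw [hxm, hym, div_le_iff₀ (by positivity)]
    nlinarith
  have hhalf_mem : ∀ u ∈ S, ∀ v ∈ S, u ≠ v → u ≠ -v → ⟪u, v⟫ = m ^ 2 / 2 →
      (1 : ℝ) / 2 ∈ Tset := by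
    intro u huS v hvS h1 h2 h3
    rw [hT]
    refine ⟨u, huS, v, hvS, h1, h2, ?_⟩
    rw [h3, hnormS u huS, hnormS v hvS, abs_of_pos (by positivity)]
    field_simp
  constructor
  · -- coherence = 1/2 → 2n < |S|
    intro hC
    have hTne : Tset.Nonempty := by
      rw [hT]
      refine ⟨_, b ⟨0, by omega⟩, (hbS _).2, b ⟨1, by omega⟩, (hbS _).2, ?_, ?_, rfl⟩
      · exact fun h => hi0 (hb.injective h)
      · intro h
        exact two_combo hb ⟨0, by omega⟩ ⟨1, by omega⟩ (by rw [h]; abel)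
    have hmem : (1 : ℝ) / 2 ∈ Tset := hC ▸ hTne.csSup_mem hTfin
    rw [hT] at hmem
    obtain ⟨x, hxS, y, hyS, hxy, hxny, hval⟩ := hmem
    have hxm := hnormS x hxS
    have hym := hnormS y hyS
    have habs : |⟪x, y⟫| = m ^ 2 / 2 := by
      rw [hxm, hym, eq_div_iff (by positivity : m * m ≠ 0)] at hval
      rw [← hval]; ring
    obtain ⟨y, hyS, hxy, hxny, hIn⟩ :
        ∃ y' ∈ S, x ≠ y' ∧ x ≠ -y' ∧ ⟪x, y'⟫ = -(m ^ 2 / 2) := by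
      rcases (abs_eq (by positivity : (0:ℝ) ≤ m ^ 2 / 2)).mp habs with hpos | hneg
      · refine ⟨-y, hnegS y hyS, hxny, by rwa [neg_neg], ?_⟩
        rw [inner_neg_right, hpos]
      · exact ⟨y, hyS, hxy, hxny, hneg⟩
    have hym' := hnormS y hyS
    obtain ⟨z, hzdef⟩ : ∃ z : Evec n, z = x + y := ⟨_, rfl⟩
    have hz2 : ‖z‖ ^ 2 = m ^ 2 := by
      rw [hzdef, norm_add_sq_real, hxm, hym', hIn]; ring
    have hz : ‖z‖ = m := by
      have h' : (‖z‖ - m) * (‖z‖ + m) = 0 := by nlinarith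
      rcases mul_eq_zero.mp h' with h | h
      · linarith
      · linarith [norm_nonneg z]
    have hz0 : z ≠ 0 := by intro h; rw [h, norm_zero] at hz; linarith
    have hzS : z ∈ S := memS_intro z
      (hzdef ▸ lat_add (memS_elim x hxS).1 (memS_elim y hyS).1) hz0 hz
    have hw : ∃ w ∈ S, w ∉ Sb := by
      by_cases h1 : x ∈ Sb
      · by_cases h2 : y ∈ Sb
        · refine ⟨z, hzS, fun h3 => ?_⟩
          obtain ⟨i, e1, he1, hx1⟩ := formSb x h1
          obtain ⟨j, e2, he2, hy1⟩ := formSb y h2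
          obtain ⟨k, e3, he3, hz1⟩ := formSb z h3
          have hij : i ≠ j := by
            intro h
            subst h
            rcases he1 with rfl | rfl <;> rcases he2 with rfl | rfl
            · exact hxy (by rw [hx1, hy1])
            · exact hxny (by rw [hx1, hy1]; simp)
            · exact hxny (by rw [hx1, hy1]; simp)
            · exact hxy (by rw [hx1, hy1])
          have he1' : e1 ≠ 0 := by rcases he1 with rfl | rfl <;> norm_num
          have he2' : e2 ≠ 0 := by rcases he2 with rfl | rfl <;> norm_num
          have he3' : e3 ≠ 0 := by rcases he3 with rfl | rfl <;> norm_num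
          exact triple_combo hb hij he1' he2' he3'
            (by rw [← hz1, hzdef, hx1, hy1])
        · exact ⟨y, hyS, h2⟩
      · exact ⟨x, hxS, h1⟩
    obtain ⟨w, hwS, hwSb⟩ := hw
    have hss : Sb ⊂ S := ⟨hSbS, fun h => hwSb (h hwS)⟩
    calc 2 * n = Sb.ncard := hSbcard.symm
    _ < S.ncard := Set.ncard_lt_ncard hss hSfin
  · -- 2n < |S| → coherence = 1/2
    intro hcard
    have hw : ∃ w ∈ S, w ∉ Sb := by
      by_contra h
      push_neg at h
      have hle : S.ncard ≤ Sb.ncard := Set.ncard_le_ncard h hSbfin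
      rw [hSbcard] at hle
      omega
    obtain ⟨w, hwS, hwSb⟩ := hw
    obtain ⟨u, huS, v, hvS, h1, h2, h3⟩ := pair_half w hwS hwSb
    have hmemT : (1 : ℝ) / 2 ∈ Tset := hhalf_mem u huS v hvS h1 h2 h3
    exact le_antisymm (csSup_le ⟨_, hmemT⟩ hbound) (le_csSup ⟨1 / 2, hbound⟩ hmemT)

end Stmt16Aux5


/-- for a well-rounded lattice with a nearly orthogonal basis,
`C(L) = 1/2` iff `|S(L)| > 2n`. -/
theorem stmt_16 {n : ℕ} (hn : 2 ≤ n) (b : Fin n → Evec n)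
    (hb : LinearIndependent ℝ b) (hNO : NearlyOrth b)
    (hWR : IsWellRounded (latticeOf b)) :
    coherence (latticeOf b) = 1 / 2 ↔ 2 * n < (minVecs (latticeOf b)).ncard := by
  have h := Stmt16Aux5.stmt_16' hn b hb hNO hWR
  exact h
end

section
/- Let n ≥ 2 and let B = {b₁,…,bₙ} be linearly independent unit vectors in ℝⁿ such that max_{1 ≤ i < j ≤ n} |⟨bᵢ,bⱼ⟩| ≤ c_n, where c_n = (√((n−2)² + 16(n−1)) − (n−2)) / (8(n−1)). Then the lattice L = span_ℤ B is well-rounded and B is a nearly orthogonal basis of L (in particular, L ∈ W*_n). -/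
open scoped RealInnerProductSpace
open Submodule Metric MeasureTheory

/-- Expansion lower bound for the squared norm of a linear combination. -/
lemma key_expand {n : ℕ} (b : Fin n → Evec n) (hunit : ∀ i, ‖b i‖ = 1)
    {c : ℝ} (hcoh : ∀ i j : Fin n, i ≠ j → |⟪b i, b j⟫| ≤ c)
    (s : Finset (Fin n)) (a : Fin n → ℝ) :
    (∑ j ∈ s, (a j)^2) - c * ((∑ j ∈ s, |a j|)^2 - ∑ j ∈ s, (a j)^2)
      ≤ ‖∑ j ∈ s, a j • b j‖^2 := by
  have hbb : ∀ i : Fin n, ⟪b i, b i⟫ = 1 := by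
    intro i; rw [real_inner_self_eq_norm_sq, hunit]; norm_num
  have hexp : ‖∑ j ∈ s, a j • b j‖^2
      = ∑ i ∈ s, ∑ j ∈ s, a i * a j * ⟪b i, b j⟫ := by
    rw [← real_inner_self_eq_norm_sq, sum_inner]
    refine Finset.sum_congr rfl fun i _ => ?_
    rw [real_inner_smul_left, inner_sum, Finset.mul_sum]
    refine Finset.sum_congr rfl fun j _ => ?_
    rw [real_inner_smul_right]; ring
  have hsplit : ∑ i ∈ s, ∑ j ∈ s, a i * a j * ⟪b i, b j⟫
      = (∑ i ∈ s, (a i)^2)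
        + ∑ i ∈ s, ∑ j ∈ s.erase i, a i * a j * ⟪b i, b j⟫ := by
    rw [← Finset.sum_add_distrib]
    refine Finset.sum_congr rfl fun i hi => ?_
    rw [← Finset.add_sum_erase s _ hi, hbb]; ring_nf
  have hE2 : ∑ i ∈ s, ∑ j ∈ s.erase i, |a i| * |a j|
      = (∑ j ∈ s, |a j|)^2 - ∑ j ∈ s, (a j)^2 := by
    have h1 : ∀ i ∈ s, ∑ j ∈ s.erase i, |a i| * |a j|
        = |a i| * ((∑ j ∈ s, |a j|) - |a i|) := by
      intro i hi
      rw [← Finset.mul_sum, Finset.sum_erase_eq_sub hi]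
    rw [Finset.sum_congr rfl h1]
    simp only [mul_sub]
    rw [Finset.sum_sub_distrib, ← Finset.sum_mul]
    congr 1
    · ring
    · exact Finset.sum_congr rfl fun j _ => by rw [abs_mul_abs_self, sq]
  have hterm : ∀ i ∈ s, ∀ j ∈ s.erase i,
      -(c * (|a i| * |a j|)) ≤ a i * a j * ⟪b i, b j⟫ := by
    intro i hi j hj
    have hij : i ≠ j := (Finset.ne_of_mem_erase hj).symm
    have habs : |a i * a j * ⟪b i, b j⟫| ≤ |a i| * |a j| * c := by
      rw [abs_mul, abs_mul]
      exact mul_le_mul_of_nonneg_left (hcoh i j hij) (by positivity)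
    have := neg_abs_le (a i * a j * ⟪b i, b j⟫)
    nlinarith [habs, this]
  have hoff : -(c * ((∑ j ∈ s, |a j|)^2 - ∑ j ∈ s, (a j)^2))
      ≤ ∑ i ∈ s, ∑ j ∈ s.erase i, a i * a j * ⟪b i, b j⟫ := by
    calc -(c * ((∑ j ∈ s, |a j|)^2 - ∑ j ∈ s, (a j)^2))
        = ∑ i ∈ s, ∑ j ∈ s.erase i, -(c * (|a i| * |a j|)) := by
          rw [← hE2]; simp [Finset.mul_sum]
      _ ≤ ∑ i ∈ s, ∑ j ∈ s.erase i, a i * a j * ⟪b i, b j⟫ :=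
          Finset.sum_le_sum fun i hi => Finset.sum_le_sum fun j hj => hterm i hi j hj
  rw [hexp, hsplit]
  linarith


lemma arith_cn {c N : ℝ} (hN : 2 ≤ N) (hc0 : 0 ≤ c)
    (heq : 4*(N-1)*c^2 + (N-2)*c = 1) : c * N ≤ 1 := by
  by_contra h
  push_neg at h
  nlinarith [mul_nonneg hc0 (by linarith : (0:ℝ) ≤ N - 2), sq_nonneg c,
    mul_pos (by linarith : (0:ℝ) < N - 1) (by nlinarith : (0:ℝ) < c),
    mul_nonneg (mul_nonneg hc0 hc0) (by linarith : (0:ℝ) ≤ N - 1)]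

lemma arith_min {c S T N : ℝ} (hN : 2 ≤ N) (hc0 : 0 ≤ c) (hcn : c * N ≤ 1)
    (hS1 : 1 ≤ S) (hT0 : 0 ≤ T) (hTS : T ≤ S) (hT2 : T^2 ≤ N * S) :
    1 ≤ S - c * (T^2 - S) := by
  by_cases hSn : S ≤ N
  · have hTsq : T^2 ≤ S^2 := by nlinarith
    nlinarith [mul_nonneg hc0 (by linarith : (0:ℝ) ≤ S - 1),
      mul_le_mul_of_nonneg_right hcn (by linarith : (0:ℝ) ≤ S - 1),
      mul_le_mul_of_nonneg_right (mul_le_mul_of_nonneg_left hSn hc0) (by linarith : (0:ℝ) ≤ S - 1)]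
  · push_neg at hSn
    nlinarith [mul_le_mul_of_nonneg_right hcn (by linarith : (0:ℝ) ≤ S - 1),
      mul_nonneg hc0 (by linarith : (0:ℝ) ≤ S - N),
      mul_le_mul_of_nonneg_left hcn (by linarith : (0:ℝ) ≤ S - N)]

lemma arith_proj {c T A P k N : ℝ} (hc : 0 < c) (hN : 2 ≤ N)
    (heq : 4*(N-1)*c^2 + (N-2)*c = 1) (hk0 : 0 ≤ k) (hkN : k ≤ N - 1)
    (hP0 : 0 ≤ P) (hT0 : 0 ≤ T) (hPle : P ≤ c*T) (hPge : A - c*(T^2 - A) ≤ P)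
    (hCS : T^2 ≤ k*A) : P ≤ 1/4 := by
  have h1 : (1 - (k-1)*c) * T^2 ≤ k * P := by
    nlinarith [mul_le_mul_of_nonneg_left hPge hk0,
      mul_le_mul_of_nonneg_left hCS (by linarith : (0:ℝ) ≤ 1 + c)]
  have h2 : 4*(N-1)*c^2*T^2 ≤ k*P := by
    nlinarith [mul_le_mul_of_nonneg_right
      (mul_le_mul_of_nonneg_right (by linarith : k - 1 ≤ N - 2) hc.le) (sq_nonneg T)]
  have h3 : P^2 ≤ c^2*T^2 := by nlinarith [mul_nonneg hc.le hT0]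
  have h4 : 4*(N-1)*P^2 ≤ k*P := by
    nlinarith [mul_le_mul_of_nonneg_left h3 (by linarith : (0:ℝ) ≤ 4*(N-1))]
  have h5 : 4*(N-1)*P^2 ≤ (N-1)*P := le_trans h4 (mul_le_mul_of_nonneg_right hkN hP0)
  have h6 : 4*P^2 ≤ P := by nlinarith
  nlinarith [sq_nonneg (4*P - 1)]


lemma cn_nonneg {N : ℝ} (hN : 2 ≤ N) :
    0 ≤ (Real.sqrt ((N - 2) ^ 2 + 16 * (N - 1)) - (N - 2)) / (8 * (N - 1)) := by
  have h1 : (N-2)^2 ≤ (N - 2) ^ 2 + 16 * (N - 1) := by nlinarith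
  have h2 : N - 2 ≤ Real.sqrt ((N - 2) ^ 2 + 16 * (N - 1)) := by
    calc N - 2 = Real.sqrt ((N-2)^2) := (Real.sqrt_sq (by linarith)).symm
      _ ≤ _ := Real.sqrt_le_sqrt h1
  exact div_nonneg (by linarith) (by linarith)

lemma cn_eq {N : ℝ} (hN : 2 ≤ N) :
    4*(N-1)*((Real.sqrt ((N - 2) ^ 2 + 16 * (N - 1)) - (N - 2)) / (8 * (N - 1)))^2
      + (N-2)*((Real.sqrt ((N - 2) ^ 2 + 16 * (N - 1)) - (N - 2)) / (8 * (N - 1))) = 1 := by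
  have hD : (0:ℝ) ≤ (N - 2) ^ 2 + 16 * (N - 1) := by nlinarith
  have hs : (Real.sqrt ((N - 2) ^ 2 + 16 * (N - 1)))^2 = (N - 2) ^ 2 + 16 * (N - 1) :=
    Real.sq_sqrt hD
  have hne : (8 * (N - 1)) ≠ 0 := by intro h; nlinarith
  have hne1 : (N - 1) ≠ 0 := by intro h; nlinarith
  field_simp
  rw [show (N - 2) ^ 2 + (N - 1) * 16 = (N - 2) ^ 2 + 16 * (N - 1) by ring]
  nlinarith [hs]

lemma int_norm_lb {n : ℕ} (hn : 2 ≤ n) (b : Fin n → Evec n) (hunit : ∀ i, ‖b i‖ = 1)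
    {c : ℝ} (hc0 : 0 ≤ c) (hcn : c * n ≤ 1)
    (hcoh : ∀ i j : Fin n, i ≠ j → |⟪b i, b j⟫| ≤ c)
    (d : Fin n → ℤ) (hd : d ≠ 0) : 1 ≤ ‖∑ j, (d j : ℝ) • b j‖ := by
  set a : Fin n → ℝ := fun j => (d j : ℝ) with ha
  set S := ∑ j, (a j)^2 with hS
  set T := ∑ j, |a j| with hT
  have habs : ∀ j, d j ≠ 0 → (1:ℝ) ≤ |a j| := by
    intro j h
    have h1 : 1 ≤ |d j| := Int.one_le_abs h
    have : (1:ℝ) ≤ |((d j : ℤ) : ℝ)| := by exact_mod_cast h1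
    simpa [ha] using this
  have hS1 : 1 ≤ S := by
    obtain ⟨j, hj⟩ := Function.ne_iff.mp hd
    have hj' : d j ≠ 0 := by simpa using hj
    have h1 : 1 ≤ (a j)^2 := by nlinarith [habs j hj', sq_abs (a j)]
    calc (1:ℝ) ≤ (a j)^2 := h1
      _ ≤ S := Finset.single_le_sum (fun i _ => sq_nonneg (a i)) (Finset.mem_univ j)
  have hT0 : 0 ≤ T := Finset.sum_nonneg fun i _ => abs_nonneg _
  have hTS : T ≤ S := by
    refine Finset.sum_le_sum fun j _ => ?_
    rcases eq_or_ne (d j) 0 with h | h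
    · simp [ha, h]
    · nlinarith [habs j h, sq_abs (a j)]
  have hT2 : T^2 ≤ (n:ℝ) * S := by
    have := sq_sum_le_card_mul_sum_sq (s := (Finset.univ : Finset (Fin n)))
      (f := fun j => |a j|)
    simp only [Finset.card_univ, Fintype.card_fin, sq_abs] at this
    exact_mod_cast this
  have hlow := key_expand b hunit hcoh Finset.univ a
  have hmain : 1 ≤ S - c * (T^2 - S) :=
    arith_min (by exact_mod_cast hn) hc0 hcn hS1 hT0 hTS hT2
  have hnorm : 0 ≤ ‖∑ j, (d j : ℝ) • b j‖ := norm_nonneg _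
  nlinarith [hlow, hmain]


set_option maxHeartbeats 1000000 in
lemma proj_bound {n : ℕ} (hn : 2 ≤ n) (b : Fin n → Evec n)
    (hb : LinearIndependent ℝ b) (hunit : ∀ i, ‖b i‖ = 1)
    {c : ℝ} (hc : 0 < c) (heq : 4*((n:ℝ)-1)*c^2 + ((n:ℝ)-2)*c = 1)
    (hcoh : ∀ i j : Fin n, i ≠ j → |⟪b i, b j⟫| ≤ c)
    (m : Fin n) (s : Finset (Fin n)) (hms : m ∉ s) :
    ‖(orthogonalProjection (Submodule.span ℝ (b '' (↑s : Set (Fin n)))) (b m) : Evec n)‖ ≤ 1/2 := by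
  classical
  set V := Submodule.span ℝ (b '' (↑s : Set (Fin n))) with hV
  set p : Evec n := ↑(orthogonalProjection V (b m)) with hp
  have hpV : p ∈ V := SetLike.coe_mem _
  have hvip : ⟪b m, p⟫ = ‖p‖^2 := by
    have h0 : ⟪b m - p, p⟫ = 0 :=
      inner_left_of_mem_orthogonal hpV (sub_starProjection_mem_orthogonal (K := V) (b m))
    have h1 : ⟪b m - p, p⟫ = ⟪b m, p⟫ - ⟪p, p⟫ := inner_sub_left _ _ _
    rw [real_inner_self_eq_norm_sq] at h1
    linarith
  have hmem : p ∈ Submodule.span ℝ (↑(s.image b) : Set (Evec n)) := by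
    rwa [Finset.coe_image]
  obtain ⟨f, hf⟩ := mem_span_finset.mp hmem
  have hrep : p = ∑ j ∈ s, f (b j) • b j := by
    rw [← hf.2, Finset.sum_image (fun x _ y _ h => hb.injective h)]
  set a : Fin n → ℝ := fun j => f (b j) with ha2
  set T := ∑ j ∈ s, |a j| with hTdef
  set A := ∑ j ∈ s, (a j)^2 with hAdef
  have hT0 : 0 ≤ T := Finset.sum_nonneg fun i _ => abs_nonneg _
  have hPle : ‖p‖^2 ≤ c * T := by
    have h2 : ⟪b m, p⟫ = ∑ j ∈ s, a j * ⟪b m, b j⟫ := by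
      calc ⟪b m, p⟫ = ⟪b m, ∑ j ∈ s, a j • b j⟫ := by rw [← hrep]
        _ = ∑ j ∈ s, a j * ⟪b m, b j⟫ := by
            rw [inner_sum]
            exact Finset.sum_congr rfl fun j _ => real_inner_smul_right _ _ _
    rw [← hvip, h2]
    calc ∑ j ∈ s, a j * ⟪b m, b j⟫ ≤ ∑ j ∈ s, |a j| * c := by
          refine Finset.sum_le_sum fun j hj => ?_
          have hmj : m ≠ j := fun h => hms (h ▸ hj)
          calc a j * ⟪b m, b j⟫ ≤ |a j * ⟪b m, b j⟫| := le_abs_self _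
            _ = |a j| * |⟪b m, b j⟫| := abs_mul _ _
            _ ≤ |a j| * c := mul_le_mul_of_nonneg_left (hcoh m j hmj) (abs_nonneg _)
      _ = c * T := by rw [hTdef, ← Finset.sum_mul]; ring
  have hPge : A - c * (T^2 - A) ≤ ‖p‖^2 := by
    have := key_expand b hunit hcoh s a
    rwa [← hrep] at this
  have hCS : T^2 ≤ (s.card : ℝ) * A := by
    have h := sq_sum_le_card_mul_sum_sq (s := s) (f := fun j => |a j|)
    simp only [sq_abs] at h
    exact_mod_cast h
  have hkN : (s.card : ℝ) ≤ (n:ℝ) - 1 := by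
    have h1 : s.card + 1 ≤ n := by
      have hsub : s ⊆ Finset.univ.erase m := fun x hx =>
        Finset.mem_erase.mpr ⟨fun h => hms (h ▸ hx), Finset.mem_univ x⟩
      have h2 := Finset.card_le_card hsub
      rw [Finset.card_erase_of_mem (Finset.mem_univ m), Finset.card_univ,
        Fintype.card_fin] at h2
      omega
    have h3 : ((s.card:ℝ) + 1) ≤ (n:ℝ) := by exact_mod_cast h1
    linarith
  have hP14 : ‖p‖^2 ≤ 1/4 :=
    arith_proj hc (by exact_mod_cast hn) heq (by positivity) hkN (sq_nonneg _) hT0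
      hPle hPge hCS
  nlinarith [norm_nonneg p, hP14]

/-- unit vectors with pairwise inner products bounded by `c_n`
span a well-rounded lattice for which they form a nearly orthogonal basis. -/
theorem stmt_17 {n : ℕ} (hn : 2 ≤ n) (b : Fin n → Evec n)
    (hb : LinearIndependent ℝ b) (hunit : ∀ i, ‖b i‖ = 1)
    (hcoh : ∀ i j : Fin n, i ≠ j → |⟪b i, b j⟫| ≤
      (Real.sqrt (((n : ℝ) - 2) ^ 2 + 16 * ((n : ℝ) - 1)) - ((n : ℝ) - 2)) /
        (8 * ((n : ℝ) - 1))) :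
    IsWellRounded (latticeOf b) ∧ NearlyOrth b := by
  classical
  set c := (Real.sqrt (((n : ℝ) - 2) ^ 2 + 16 * ((n : ℝ) - 1)) - ((n : ℝ) - 2)) /
      (8 * ((n : ℝ) - 1)) with hcdef
  have hN : (2:ℝ) ≤ (n:ℝ) := by exact_mod_cast hn
  have hc0 : 0 ≤ c := cn_nonneg hN
  have heq : 4*((n:ℝ)-1)*c^2 + ((n:ℝ)-2)*c = 1 := cn_eq hN
  have hcpos : 0 < c := by
    rcases hc0.lt_or_eq with h | h
    · exact h
    · exfalso; rw [← h] at heq; norm_num at heq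
  have hcn : c * (n:ℝ) ≤ 1 := arith_cn hN hc0 heq
  constructor
  · -- well rounded
    have hmem : ∀ i, b i ∈ latticeOf b := by
      intro i
      refine ⟨Pi.single i 1, ?_⟩
      simp [Pi.single_apply, apply_ite, ite_smul]
    have hminv : ∀ i, b i ∈ minVecs (latticeOf b) := by
      intro i
      refine ⟨hmem i, ?_, ?_⟩
      · intro h0
        have h1 := hunit i
        rw [h0] at h1; simp at h1
      · rintro y ⟨d, rfl⟩ hy
        rw [hunit]
        have hd : d ≠ 0 := by rintro rfl; simp at hy
        exact int_norm_lb hn b hunit hc0 hcn hcoh d hd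
    rw [IsWellRounded]
    haveI : Nonempty (Fin n) := ⟨⟨0, by omega⟩⟩
    have htop : Submodule.span ℝ (Set.range b) = ⊤ :=
      hb.span_eq_top_of_card_eq_finrank (by simp)
    rw [eq_top_iff, ← htop]
    exact Submodule.span_mono (by rintro x ⟨i, rfl⟩; exact hminv i)
  · intro σ i hi
    set s : Finset (Fin n) := (Finset.univ.filter (fun j => j < i)).image σ with hsdef
    have himg : (b ∘ σ) '' {j | j < i} = b '' (↑s : Set (Fin n)) := by
      rw [Set.image_comp]
      congr 1
      rw [hsdef, Finset.coe_image, Finset.coe_filter_univ]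
    have hms : σ i ∉ s := by
      rw [hsdef]
      simp only [Finset.mem_image, Finset.mem_filter, Finset.mem_univ, true_and]
      rintro ⟨j, hj, hj2⟩
      have : j = i := σ.injective hj2
      subst this
      exact lt_irrefl _ hj
    have hb2 := proj_bound hn b hb hunit hcpos heq hcoh (σ i) s hms
    show Real.pi/3 ≤ subAngle ((b ∘ σ) i) _
    rw [himg, subAngle]
    simp only [Function.comp_apply]
    rw [hunit, div_one]
    have harc : Real.pi/3 = Real.arccos (1/2) := by
      rw [← Real.cos_pi_div_three]
      exact (Real.arccos_cos (by positivity) (by linarith [Real.pi_pos])).symm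
    rw [harc]
    simp only [Real.arccos]
    have hmono := Real.monotone_arcsin hb2
    linarith
end
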